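/- arXiv:2206.09905 — 4 statements merged into one kernel-verified Lean document; each statement's English description precedes it below -/
import Mathlib

section
/- Let X : [0,T] → V be α-Hölder with α ∈ (1/3, 1/2], let f : U → W be twice continuously differentiable with bounded first and second derivatives on the range of Z, and let (Z, Z') be a controlled path with respect to X with values in U. Then η_t := f(Z_t) defines a controlled path (η, η') with Gubinelli derivative η'_t = Df(Z_t) ∘ Z'_t, i.e., the remainder R^η_{st} := f(Z_t) − f(Z_s) − Df(Z_s)(Z'_s X_{st}) satisfies sup_{s<t} |R^η_{st}|/|t−s|^{2α} < ∞. -/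
open Set

/-- If `f : U → W` is twice continuously differentiable with first
and second derivatives bounded on (the closed convex hull of) the range of the
controlled path `(Z, Z')`, then `η_t := f (Z_t)` is a controlled path with
Gubinelli derivative `η'_t = Df(Z_t) ∘ Z'_t`, i.e. the remainder
`R^η_{st} = f(Z_t) − f(Z_s) − Df(Z_s)(Z'_s X_{st})` is 2α-Hölder. -/
theorem controlled_composition {U V W : Type*}
    [NormedAddCommGroup U] [NormedSpace ℝ U]
    [NormedAddCommGroup V] [NormedSpace ℝ V]
    [NormedAddCommGroup W] [NormedSpace ℝ W]
    (α T : ℝ) (hα1 : 1/3 < α) (hα2 : α ≤ 1/2) (hT : 0 < T)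
    (X : ℝ → V) (CX : ℝ)
    (hX : ∀ s t : ℝ, 0 ≤ s → s ≤ t → t ≤ T → ‖X t - X s‖ ≤ CX * |t - s| ^ α)
    (Z : ℝ → U) (Z' : ℝ → V →L[ℝ] U) (CZ CZ' CRZ : ℝ)
    (hZ : ∀ s t : ℝ, 0 ≤ s → s ≤ t → t ≤ T → ‖Z t - Z s‖ ≤ CZ * |t - s| ^ α)
    (hZ' : ∀ s t : ℝ, 0 ≤ s → s ≤ t → t ≤ T → ‖Z' t - Z' s‖ ≤ CZ' * |t - s| ^ α)
    (hRZ : ∀ s t : ℝ, 0 ≤ s → s ≤ t → t ≤ T →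
      ‖Z t - Z s - Z' s (X t - X s)‖ ≤ CRZ * |t - s| ^ (2*α))
    (f : U → W) (hf : ContDiff ℝ 2 f) (M1 M2 : ℝ)
    (hDf : ∀ x ∈ convexHull ℝ (Z '' Icc 0 T), ‖fderiv ℝ f x‖ ≤ M1)
    (hD2f : ∀ x ∈ convexHull ℝ (Z '' Icc 0 T),
      ‖fderiv ℝ (fderiv ℝ f) x‖ ≤ M2) :
    ∃ C : ℝ, ∀ s t : ℝ, 0 ≤ s → s ≤ t → t ≤ T →
      ‖f (Z t) - f (Z s) - fderiv ℝ f (Z s) (Z' s (X t - X s))‖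
        ≤ C * |t - s| ^ (2*α) := by
  set S := convexHull ℝ (Z '' Icc 0 T) with hS
  have hSconv : Convex ℝ S := convex_convexHull _ _
  have hZmem : ∀ u : ℝ, 0 ≤ u → u ≤ T → Z u ∈ S := fun u hu huT =>
    subset_convexHull _ _ ⟨u, ⟨hu, huT⟩, rfl⟩
  have hfd : Differentiable ℝ f := hf.differentiable (by norm_num)
  have hfd2 : Differentiable ℝ (fderiv ℝ f) :=
    (hf.fderiv_right (m := 1) (by norm_num)).differentiable one_ne_zero
  -- M2 ≥ 0
  have hM2 : 0 ≤ M2 := le_trans (norm_nonneg (fderiv ℝ (fderiv ℝ f) (Z 0))) (hD2f (Z 0) (hZmem 0 le_rfl hT.le))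
  -- Lipschitz bound for fderiv f on S
  have hlip : ∀ x ∈ S, ∀ y ∈ S, ‖fderiv ℝ f y - fderiv ℝ f x‖ ≤ M2 * ‖y - x‖ :=
    fun x hx y hy =>
      hSconv.norm_image_sub_le_of_norm_fderiv_le (fun z hz => (hfd2 z)) hD2f hx hy
  refine ⟨M1 * CRZ + M2 * CZ ^ 2, ?_⟩
  intro s t hs hst htT
  have hsT : s ≤ T := hst.trans htT
  have ht0 : 0 ≤ t := hs.trans hst
  have hZs : Z s ∈ S := hZmem s hs hsT
  have hZt : Z t ∈ S := hZmem t ht0 htT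
  -- Taylor estimate on the segment [Z s, Z t]
  have hsegS : segment ℝ (Z s) (Z t) ⊆ S := hSconv.segment_subset hZs hZt
  have hseg : ∀ x ∈ segment ℝ (Z s) (Z t), ‖x - Z s‖ ≤ ‖Z t - Z s‖ := by
    rintro x ⟨a, b, ha, hb, hab, rfl⟩
    have : a • Z s + b • Z t - Z s = b • (Z t - Z s) := by
      have ha' : a = 1 - b := by linarith
      rw [ha', sub_smul, one_smul, smul_sub]; abel
    rw [this, norm_smul, Real.norm_eq_abs, abs_of_nonneg hb]
    nlinarith [norm_nonneg (Z t - Z s)]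
  have htaylor : ‖f (Z t) - f (Z s) - fderiv ℝ f (Z s) (Z t - Z s)‖
      ≤ (M2 * ‖Z t - Z s‖) * ‖Z t - Z s‖ := by
    refine (convex_segment _ _).norm_image_sub_le_of_norm_fderiv_le'
      (fun x hx => (hfd x)) (fun x hx => ?_) (left_mem_segment _ _ _)
      (right_mem_segment _ _ _)
    calc ‖fderiv ℝ f x - fderiv ℝ f (Z s)‖ ≤ M2 * ‖x - Z s‖ :=
          hlip _ hZs _ (hsegS hx)
      _ ≤ M2 * ‖Z t - Z s‖ := by
          exact mul_le_mul_of_nonneg_left (hseg x hx) hM2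
  -- bound on the linear part
  have hM1s : ‖fderiv ℝ f (Z s)‖ ≤ M1 := hDf _ hZs
  have hlin : ‖fderiv ℝ f (Z s) (Z t - Z s - Z' s (X t - X s))‖
      ≤ M1 * (CRZ * |t - s| ^ (2*α)) := by
    calc ‖fderiv ℝ f (Z s) (Z t - Z s - Z' s (X t - X s))‖
        ≤ ‖fderiv ℝ f (Z s)‖ * ‖Z t - Z s - Z' s (X t - X s)‖ :=
          (fderiv ℝ f (Z s)).le_opNorm _
      _ ≤ M1 * (CRZ * |t - s| ^ (2*α)) := by
          apply mul_le_mul hM1s (hRZ s t hs hst htT) (norm_nonneg _)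
          exact (norm_nonneg _).trans hM1s
  -- |t-s|^(2α) = (|t-s|^α)^2
  have hpow : |t - s| ^ (2*α) = (|t - s| ^ α) * (|t - s| ^ α) := by
    rw [mul_comm 2 α, Real.rpow_mul (abs_nonneg _)]
    rw [show ((2:ℝ)) = ((2:ℕ):ℝ) by norm_num, Real.rpow_natCast]
    ring
  have hZ2 : ‖Z t - Z s‖ * ‖Z t - Z s‖ ≤ CZ ^ 2 * |t - s| ^ (2*α) := by
    have h1 := hZ s t hs hst htT
    have := mul_self_le_mul_self (norm_nonneg (Z t - Z s)) h1
    calc ‖Z t - Z s‖ * ‖Z t - Z s‖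
        ≤ (CZ * |t - s| ^ α) * (CZ * |t - s| ^ α) := this
      _ = CZ ^ 2 * |t - s| ^ (2*α) := by rw [hpow]; ring
  -- assemble
  have hdecomp : f (Z t) - f (Z s) - fderiv ℝ f (Z s) (Z' s (X t - X s))
      = (f (Z t) - f (Z s) - fderiv ℝ f (Z s) (Z t - Z s))
        + fderiv ℝ f (Z s) (Z t - Z s - Z' s (X t - X s)) := by
    rw [map_sub (fderiv ℝ f (Z s)) (Z t - Z s) (Z' s (X t - X s))]; abel
  calc ‖f (Z t) - f (Z s) - fderiv ℝ f (Z s) (Z' s (X t - X s))‖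
      ≤ ‖f (Z t) - f (Z s) - fderiv ℝ f (Z s) (Z t - Z s)‖
        + ‖fderiv ℝ f (Z s) (Z t - Z s - Z' s (X t - X s))‖ := by
        rw [hdecomp]; exact norm_add_le _ _
    _ ≤ (M2 * ‖Z t - Z s‖) * ‖Z t - Z s‖ + M1 * (CRZ * |t - s| ^ (2*α)) :=
        add_le_add htaylor hlin
    _ ≤ M2 * (CZ ^ 2 * |t - s| ^ (2*α)) + M1 * (CRZ * |t - s| ^ (2*α)) := by
        have : (M2 * ‖Z t - Z s‖) * ‖Z t - Z s‖
            = M2 * (‖Z t - Z s‖ * ‖Z t - Z s‖) := by ring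
        rw [this]
        exact add_le_add_left (mul_le_mul_of_nonneg_left hZ2 hM2) _
    _ = (M1 * CRZ + M2 * CZ ^ 2) * |t - s| ^ (2*α) := by ring
end

section
/- Let (X, 𝕏) be an α-Hölder rough path, (Y, Y') a controlled path with values in L(W, U′), and (Z, Z') a controlled path with values in W. Then the germ Ξ_{st} := Y_s Z_{st} + (Y'_s · Z'_s) 𝕏_{st}, where (Y'_s · Z'_s)(v ⊗ v′) := Y'_s(v)(Z'_s(v′)), satisfies |Ξ_{st} − Ξ_{su} − Ξ_{ut}| ≤ C(‖Y'‖_∞‖Z'‖_α‖X‖_α² + ‖Y‖_α‖R^Z‖_{2α} + ‖R^Y‖_{2α}‖Z'‖_∞‖X‖_α + ‖Y'·Z'‖_α‖𝕏‖_{2α})|t−s|^{3α} for all s ≤ u ≤ t, with C depending only on α and T. Consequently (by the sewing lemma) the integral ∫_0^t Y_r d_X Z_r := lim_{|π|→0} Σ_{[u,v]∈π} (Y_u Z_{uv} + (Y'_u · Z'_u)𝕏_{uv}) exists. -/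
open Set Filter

/-- A Riemann-sum limit over partitions of `[s,t]` with mesh tending to zero. -/
def IsPartitionLimit {E : Type*} [NormedAddCommGroup E]
    (s t : ℝ) (F : ℝ → ℝ → E) (I : E) : Prop :=
  ∀ (p : ℕ → ℕ → ℝ) (k : ℕ → ℕ) (mesh : ℕ → ℝ),
    (∀ n, p n 0 = s) → (∀ n, p n (k n) = t) →
    (∀ n i, i < k n → p n i ≤ p n (i+1)) →
    (∀ n i, i < k n → p n (i+1) - p n i ≤ mesh n) →
    Tendsto mesh atTop (nhds 0) →
    Tendsto (fun n => ∑ i ∈ Finset.range (k n), F (p n i) (p n (i+1)))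
      atTop (nhds I)

namespace RPAux
open List

variable {E : Type*} [NormedAddCommGroup E]

/-- Riemann sum of a germ `A` over the consecutive pairs of a list. -/
def RS (A : ℝ → ℝ → E) : List ℝ → E
  | [] => 0
  | [_] => 0
  | x :: y :: l => A x y + RS A (y :: l)

@[simp] lemma RS_nil (A : ℝ → ℝ → E) : RS A [] = 0 := rfl
@[simp] lemma RS_single (A : ℝ → ℝ → E) (x : ℝ) : RS A [x] = 0 := rfl
@[simp] lemma RS_cons_cons (A : ℝ → ℝ → E) (x y : ℝ) (l : List ℝ) :
    RS A (x :: y :: l) = A x y + RS A (y :: l) := rfl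

lemma RS_cons (A : ℝ → ℝ → E) (x : ℝ) (l : List ℝ) (h : l ≠ []) :
    RS A (x :: l) = A x (l.head h) + RS A l := by
  cases l with
  | nil => exact absurd rfl h
  | cons y l => rfl

lemma RS_append (A : ℝ → ℝ → E) :
    ∀ (l₁ l₂ : List ℝ) (h₁ : l₁ ≠ []) (h₂ : l₂ ≠ []),
    RS A (l₁ ++ l₂) = RS A l₁ + A (l₁.getLast h₁) (l₂.head h₂) + RS A l₂ := by
  intro l₁
  induction l₁ with
  | nil => intro l₂ h₁ h₂; exact absurd rfl h₁
  | cons x l₁ ih =>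
    intro l₂ h₁ h₂
    cases l₁ with
    | nil =>
      simp only [List.cons_append, List.nil_append, List.getLast_singleton]
      rw [RS_cons A x l₂ h₂, RS_single]
      abel
    | cons y l₁ =>
      have hne : (y :: l₁ : List ℝ) ≠ [] := by simp
      have ih' := ih l₂ hne h₂
      simp only [List.cons_append] at ih' ⊢
      rw [RS_cons_cons, ih', List.getLast_cons hne, RS_cons_cons]
      abel

lemma range_map_eq (p : ℕ → ℝ) (k : ℕ) :
    (List.range (k+1+1)).map p = p 0 :: (List.range (k+1)).map (fun i => p (i+1)) := by
  rw [List.range_succ_eq_map, List.map_cons, List.map_map]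
  rfl

lemma head_range_map (p : ℕ → ℝ) (k : ℕ) (h : ((List.range (k+1)).map p) ≠ []) :
    ((List.range (k+1)).map p).head h = p 0 := by
  have h2 : ((List.range (k+1)).map p).head? = some (p 0) := by
    cases k with
    | zero => rfl
    | succ k => rw [range_map_eq]; rfl
  have h3 := List.head?_eq_head (l := (List.range (k+1)).map p) h
  rw [h2] at h3
  exact (Option.some_injective _ h3).symm

lemma getLast_range_map (p : ℕ → ℝ) (k : ℕ) (h : ((List.range (k+1)).map p) ≠ []) :
    ((List.range (k+1)).map p).getLast h = p k := by
  have : (List.range (k+1)).map p = (List.range k).map p ++ [p k] := by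
    rw [List.range_succ, List.map_append]; rfl
  simp only [this]
  exact List.getLast_concat

lemma range_map_ne_nil (p : ℕ → ℝ) (k : ℕ) : ((List.range (k+1)).map p) ≠ [] := by
  simp [List.range_succ]

lemma RS_range_map (A : ℝ → ℝ → E) :
    ∀ (k : ℕ) (p : ℕ → ℝ),
    RS A ((List.range (k+1)).map p) = ∑ i ∈ Finset.range k, A (p i) (p (i+1)) := by
  intro k
  induction k with
  | zero => intro p; simp [List.range_succ]
  | succ k ih =>
    intro p
    rw [range_map_eq, RS_cons A _ _ (range_map_ne_nil _ _), head_range_map,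
      ih (fun i => p (i+1)), Finset.sum_range_succ' (fun i => A (p i) (p (i+1))) k]
    abel


lemma sorted_head_le {l : List ℝ} (hs : List.Pairwise (· ≤ ·) l) (h : l ≠ []) {x : ℝ}
    (hx : x ∈ l) : l.head h ≤ x := by
  cases l with
  | nil => exact absurd rfl h
  | cons a l =>
    rcases List.mem_cons.mp hx with rfl | hx
    · exact le_refl _
    · exact List.rel_of_pairwise_cons hs hx

lemma sorted_le_getLast : ∀ {l : List ℝ}, List.Pairwise (· ≤ ·) l → ∀ (h : l ≠ []) {x : ℝ},
    x ∈ l → x ≤ l.getLast h := by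
  intro l
  induction l with
  | nil => intro _ h; exact absurd rfl h
  | cons a l ih =>
    intro hs h x hx
    cases l with
    | nil => simp at hx; simp [hx]
    | cons b l =>
      rw [List.getLast_cons (by simp : (b :: l : List ℝ) ≠ [])]
      rcases List.mem_cons.mp hx with rfl | hx
      · exact le_trans (List.rel_of_pairwise_cons hs (a' := b) (by simp))
          (ih hs.of_cons (by simp) (by simp))
      · exact ih hs.of_cons (by simp) hx

/-- remove consecutive duplicates from a list -/
noncomputable def dd : List ℝ → List ℝ
  | [] => []
  | [x] => [x]
  | x :: y :: l => if x = y then dd (y :: l) else x :: dd (y :: l)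

@[simp] lemma dd_nil : dd [] = [] := rfl
@[simp] lemma dd_single (x : ℝ) : dd [x] = [x] := rfl
lemma dd_cons_cons (x y : ℝ) (l : List ℝ) :
    dd (x :: y :: l) = if x = y then dd (y :: l) else x :: dd (y :: l) := rfl

lemma dd_ne_nil : ∀ {l : List ℝ}, l ≠ [] → dd l ≠ [] := by
  intro l
  induction l with
  | nil => intro h; exact absurd rfl h
  | cons x l ih =>
    intro _
    cases l with
    | nil => simp
    | cons y l =>
      rw [dd_cons_cons]
      split
      · exact ih (by simp)
      · simp

lemma dd_sublist : ∀ (l : List ℝ), dd l <+ l := by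
  intro l
  induction l with
  | nil => simp
  | cons x l ih =>
    cases l with
    | nil => simp
    | cons y l =>
      rw [dd_cons_cons]
      split
      · exact ih.trans (List.sublist_cons_self _ _)
      · exact ih.cons₂ x

lemma dd_head : ∀ (l : List ℝ) (h : l ≠ []), (dd l).head (dd_ne_nil h) = l.head h := by
  intro l
  induction l with
  | nil => intro h; exact absurd rfl h
  | cons x l ih =>
    intro h
    cases l with
    | nil => rfl
    | cons y l =>
      by_cases hxy : x = y
      · have e : dd (x :: y :: l) = dd (y :: l) := by rw [dd_cons_cons, if_pos hxy]
        have := ih (by simp)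
        subst hxy
        simp only [e]
        rw [show ((x :: l : List ℝ).head (by simp)) = x from rfl] at this
        convert this using 2
        rfl
      · have e : dd (x :: y :: l) = x :: dd (y :: l) := by rw [dd_cons_cons, if_neg hxy]
        simp only [e]
        rfl

lemma dd_getLast : ∀ (l : List ℝ) (h : l ≠ []), (dd l).getLast (dd_ne_nil h) = l.getLast h := by
  intro l
  induction l with
  | nil => intro h; exact absurd rfl h
  | cons x l ih =>
    intro h
    cases l with
    | nil => rfl
    | cons y l =>
      have hyl : (y :: l : List ℝ) ≠ [] := by simp
      rw [List.getLast_cons hyl]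
      by_cases hxy : x = y
      · have e : dd (x :: y :: l) = dd (y :: l) := by rw [dd_cons_cons, if_pos hxy]
        rw [← ih hyl]
        congr 1 <;> simp [e]
      · have e : dd (x :: y :: l) = x :: dd (y :: l) := by rw [dd_cons_cons, if_neg hxy]
        rw [← ih hyl]
        have hddne : dd (y :: l) ≠ [] := dd_ne_nil hyl
        simp only [e]
        rw [List.getLast_cons hddne]

lemma dd_sorted : ∀ (l : List ℝ), List.Chain' (· ≤ ·) l → List.Pairwise (· < ·) (dd l) := by
  intro l
  induction l with
  | nil => simp
  | cons x l ih =>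
    intro hc
    cases l with
    | nil => simp
    | cons y l =>
      have hxy : x ≤ y := List.isChain_cons_cons.mp hc |>.1
      have hc' : List.Chain' (· ≤ ·) (y :: l) := List.isChain_cons_cons.mp hc |>.2
      rw [dd_cons_cons]
      split
      · exact ih hc'
      · rename_i hne
        rw [List.pairwise_cons]
        refine ⟨?_, ih hc'⟩
        intro b hb
        have hb' : b ∈ (y :: l : List ℝ) := (dd_sublist _).subset hb
        have : y ≤ b := sorted_head_le (List.isChain_iff_pairwise.mp hc') (by simp) hb'
        exact lt_of_lt_of_le (lt_of_le_of_ne hxy hne) this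

lemma RS_dd (A : ℝ → ℝ → E) : ∀ (l : List ℝ), (∀ x ∈ l, A x x = 0) →
    RS A (dd l) = RS A l := by
  intro l
  induction l with
  | nil => simp
  | cons x l ih =>
    intro hdiag
    cases l with
    | nil => rfl
    | cons y l =>
      have hyl : (y :: l : List ℝ) ≠ [] := by simp
      by_cases hxy : x = y
      · rw [dd_cons_cons, if_pos hxy, RS_cons_cons, ih (fun z hz => hdiag z (by simp [hz]))]
        subst hxy
        rw [hdiag x (by simp), zero_add]
      · rw [dd_cons_cons, if_neg hxy,
          RS_cons A x (dd (y :: l)) (dd_ne_nil hyl), dd_head (y :: l) hyl,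
          ih (fun z hz => hdiag z (by simp [hz])), RS_cons_cons]
        rfl

lemma sublist_of_subset_sorted : ∀ (l₂ l₁ : List ℝ), List.Pairwise (· < ·) l₁ →
    List.Pairwise (· < ·) l₂ → (∀ x ∈ l₁, x ∈ l₂) → l₁ <+ l₂ := by
  intro l₂
  induction l₂ with
  | nil =>
    intro l₁ _ _ hsub
    cases l₁ with
    | nil => simp
    | cons a l₁ => exact absurd (hsub a (by simp)) (by simp)
  | cons b l₂ ih =>
    intro l₁ h₁ h₂ hsub
    cases l₁ with
    | nil => simp
    | cons a l₁ =>
      by_cases hab : a = b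
      · subst hab
        refine List.Sublist.cons₂ a (ih l₁ h₁.of_cons h₂.of_cons ?_)
        intro x hx
        have hax : a < x := List.rel_of_pairwise_cons h₁ hx
        rcases List.mem_cons.mp (hsub x (by simp [hx])) with rfl | h
        · exact absurd hax (lt_irrefl _)
        · exact h
      · have ha : a ∈ l₂ := by
          rcases List.mem_cons.mp (hsub a (by simp)) with rfl | h
          · exact absurd rfl hab
          · exact h
        refine List.Sublist.cons b (ih (a :: l₁) h₁ h₂.of_cons ?_)
        intro x hx
        rcases List.mem_cons.mp hx with rfl | hx'
        · exact ha
        · have hax : a < x := List.rel_of_pairwise_cons h₁ hx'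
          rcases List.mem_cons.mp (hsub x (by simp [hx'])) with heq | h
          · have hba : b < x := lt_trans (List.rel_of_pairwise_cons h₂ ha) hax
            exact absurd hba (not_lt.mpr (le_of_eq heq))
          · exact h

lemma mono_of_steps {p : ℕ → ℝ} {k : ℕ} (hp : ∀ i < k, p i ≤ p (i+1)) :
    ∀ i j, i ≤ j → j ≤ k → p i ≤ p j := by
  intro i j hij hjk
  induction j with
  | zero => simp_all
  | succ j ihj =>
    rcases Nat.eq_or_lt_of_le hij with rfl | hlt
    · exact le_refl _
    · exact le_trans (ihj (Nat.lt_succ_iff.mp hlt) (le_trans (Nat.le_succ _) hjk))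
        (hp j (Nat.lt_of_lt_of_le (Nat.lt_succ_self _) hjk))


lemma head_append_left {l₁ l₂ : List ℝ} (h₁ : l₁ ≠ []) (h : l₁ ++ l₂ ≠ []) :
    (l₁ ++ l₂).head h = l₁.head h₁ := by
  cases l₁ with
  | nil => exact absurd rfl h₁
  | cons a l => rfl

lemma getLast_append_right {l₁ l₂ : List ℝ} (h₂ : l₂ ≠ []) (h : l₁ ++ l₂ ≠ []) :
    (l₁ ++ l₂).getLast h = l₂.getLast h₂ := by
  rw [List.getLast_append]
  simp [h₂]

lemma head_congr {l₁ l₂ : List ℝ} (e : l₁ = l₂) (h₁ : l₁ ≠ []) (h₂ : l₂ ≠ []) :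
    l₁.head h₁ = l₂.head h₂ := by subst e; rfl

lemma getLast_congr {l₁ l₂ : List ℝ} (e : l₁ = l₂) (h₁ : l₁ ≠ []) (h₂ : l₂ ≠ []) :
    l₁.getLast h₁ = l₂.getLast h₂ := by subst e; rfl

lemma A_diag (A : ℝ → ℝ → E) {K γ T : ℝ} (hγ : 1 < γ)
    (hδ : ∀ s u t : ℝ, 0 ≤ s → s ≤ u → u ≤ t → t ≤ T → ‖A s t - A s u - A u t‖ ≤ K * (t-s)^γ)
    {x : ℝ} (hx : x ∈ Icc (0:ℝ) T) : A x x = 0 := by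
  have h := hδ x x x hx.1 le_rfl le_rfl hx.2
  rw [sub_self x, Real.zero_rpow (by linarith), mul_zero] at h
  have e : A x x - A x x - A x x = -A x x := by abel
  rw [e, norm_neg] at h
  exact norm_le_zero_iff.mp h

lemma RS_const (A : ℝ → ℝ → E) (a : ℝ) (ha : A a a = 0) :
    ∀ (l : List ℝ), (∀ x ∈ l, x = a) → RS A l = 0 := by
  intro l
  induction l with
  | nil => simp
  | cons x l ih =>
    intro hall
    cases l with
    | nil => simp
    | cons y l =>
      rw [RS_cons_cons, ih (fun z hz => hall z (by simp [hz])), add_zero,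
        hall x (by simp), hall y (by simp), ha]

lemma maximal (A : ℝ → ℝ → E) {K γ T : ℝ} (hγ : 1 < γ) (hK : 0 ≤ K)
    (hδ : ∀ s u t : ℝ, 0 ≤ s → s ≤ u → u ≤ t → t ≤ T → ‖A s t - A s u - A u t‖ ≤ K * (t-s)^γ) :
    ∀ (L : List ℝ), List.Chain' (· ≤ ·) L → (∀ x ∈ L, x ∈ Icc (0:ℝ) T) → ∀ (h : L ≠ []),
    ‖RS A L - A (L.head h) (L.getLast h)‖
      ≤ (2 / (1 - 2^(1-γ))) * K * (L.getLast h - L.head h)^γ := by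
  have h2lt : (2:ℝ)^(1-γ) < 1 := Real.rpow_lt_one_of_one_lt_of_neg one_lt_two (by linarith)
  have hden : 0 < 1 - (2:ℝ)^(1-γ) := by linarith
  set c := 2 / (1 - (2:ℝ)^(1-γ)) with hc
  have hcpos : 0 < c := by positivity
  have hrec : c = 2 + c * 2^(1-γ) := by
    rw [hc]; field_simp; ring
  have hγ0 : (0:ℝ) ≤ γ := by linarith
  have hq : (2:ℝ)/(2:ℝ)^γ = 2^(1-γ) := by
    rw [Real.rpow_sub two_pos, Real.rpow_one]
  suffices H : ∀ n (L : List ℝ), L.length ≤ n → List.Chain' (· ≤ ·) L →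
      (∀ x ∈ L, x ∈ Icc (0:ℝ) T) → ∀ (h : L ≠ []),
      ‖RS A L - A (L.head h) (L.getLast h)‖ ≤ c * K * (L.getLast h - L.head h)^γ by
    exact fun L hch hmem h => H L.length L le_rfl hch hmem h
  intro n
  induction n with
  | zero =>
    intro L hlen _ _ h
    cases L with
    | nil => exact absurd rfl h
    | cons a l => simp at hlen
  | succ n IH =>
    intro L hlen hch hmem h
    have hsorted : List.Pairwise (· ≤ ·) L := List.isChain_iff_pairwise.mp hch
    set s := L.head h with hs
    set t := L.getLast h with ht
    have hsmem : s ∈ L := L.head_mem h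
    have htmem : t ∈ L := L.getLast_mem h
    have h0s : 0 ≤ s := (hmem s hsmem).1
    have htT : t ≤ T := (hmem t htmem).2
    have hst : s ≤ t := sorted_le_getLast hsorted h hsmem
    rcases eq_or_lt_of_le hst with heq | hlt
    · have hAss : A s s = 0 := A_diag A hγ hδ (hmem s hsmem)
      have hall : ∀ x ∈ L, x = s := fun x hx =>
        le_antisymm (heq ▸ sorted_le_getLast hsorted h hx) (sorted_head_le hsorted h hx)
      rw [RS_const A s hAss L hall, ← heq, hAss, sub_zero, norm_zero, sub_self,
        Real.zero_rpow (by linarith : γ ≠ 0), mul_zero]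
    · set m := (s + t)/2 with hm
      set P : ℝ → Bool := fun x => decide (x ≤ m) with hP
      set L₁ := L.takeWhile P with hL₁
      set L₂ := L.dropWhile P with hL₂
      have hL : L₁ ++ L₂ = L := List.takeWhile_append_dropWhile
      have hL₂ne : L₂ ≠ [] := by
        intro hnil
        have hLL : L₁ = L := by rw [← hL, hnil, List.append_nil]
        have ht1 : t ∈ L₁ := by rw [hLL]; exact htmem
        have := List.mem_takeWhile_imp ht1
        have htm : t ≤ m := of_decide_eq_true this
        rw [hm] at htm; linarith
      have hPhead : P (L₂.head hL₂ne) = false := List.head_dropWhile_not P hL₂ne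
      have hL₁ne : L₁ ≠ [] := by
        intro hnil
        have hLL : L₂ = L := by rw [← hL, hnil, List.nil_append]
        have hh : L₂.head hL₂ne = s := head_congr hLL hL₂ne h
        rw [hh] at hPhead
        have hns : ¬ (s ≤ m) := of_decide_eq_false hPhead
        rw [hm] at hns; exact hns (by linarith)
      have hLne : L₁ ++ L₂ ≠ [] := by rw [hL]; exact h
      have hhead₁ : L₁.head hL₁ne = s :=
        (head_append_left hL₁ne hLne).symm.trans (head_congr hL hLne h)
      have hlast₂ : L₂.getLast hL₂ne = t :=
        (getLast_append_right hL₂ne hLne).symm.trans (getLast_congr hL hLne h)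
      set xj := L₁.getLast hL₁ne with hxj
      set x1 := L₂.head hL₂ne with hx1
      have hxjm : xj ≤ m := of_decide_eq_true (List.mem_takeWhile_imp (l := L) (L₁.getLast_mem hL₁ne))
      have hx1m : m < x1 := not_le.mp (of_decide_eq_false hPhead)
      have hchL : List.Chain' (· ≤ ·) (L₁ ++ L₂) := by rw [hL]; exact hch
      obtain ⟨hch₁, hch₂, hbd⟩ := List.isChain_append.mp hchL
      have hxjx1 : xj ≤ x1 := by
        refine hbd xj ?_ x1 ?_
        · rw [List.getLast?_eq_getLast hL₁ne]; rfl
        · rw [List.head?_eq_head hL₂ne]; rfl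
      have hmem₁ : ∀ x ∈ L₁, x ∈ Icc (0:ℝ) T := fun x hx =>
        hmem x ((List.takeWhile_sublist P (l := L)).subset hx)
      have hmem₂ : ∀ x ∈ L₂, x ∈ Icc (0:ℝ) T := fun x hx =>
        hmem x ((List.dropWhile_sublist P (l := L)).subset hx)
      have hxjL : xj ∈ L := (List.takeWhile_sublist P (l := L)).subset (L₁.getLast_mem hL₁ne)
      have hx1L : x1 ∈ L := (List.dropWhile_sublist P (l := L)).subset (L₂.head_mem hL₂ne)
      have hsxj : s ≤ xj := sorted_head_le hsorted h hxjL
      have hxjt : xj ≤ t := sorted_le_getLast hsorted h hxjL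
      have hx1t : x1 ≤ t := sorted_le_getLast hsorted h hx1L
      have h0xj : 0 ≤ xj := le_trans h0s hsxj
      have hlen₁ : L₁.length ≤ n := by
        have := congrArg List.length hL
        rw [List.length_append] at this
        have h2 : 0 < L₂.length := List.length_pos_iff.mpr hL₂ne
        omega
      have hlen₂ : L₂.length ≤ n := by
        have := congrArg List.length hL
        rw [List.length_append] at this
        have h2 : 0 < L₁.length := List.length_pos_iff.mpr hL₁ne
        omega
      have IH₁ := IH L₁ hlen₁ hch₁ hmem₁ hL₁ne
      have IH₂ := IH L₂ hlen₂ hch₂ hmem₂ hL₂ne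
      rw [hhead₁] at IH₁
      rw [hlast₂] at IH₂
      have hRS : RS A L = RS A L₁ + A xj x1 + RS A L₂ := by
        have := RS_append A L₁ L₂ hL₁ne hL₂ne
        rw [hL] at this
        exact this
      have hE1 : ‖A s t - A s xj - A xj t‖ ≤ K * (t - s)^γ := hδ s xj t h0s hsxj hxjt htT
      have hE2 : ‖A xj t - A xj x1 - A x1 t‖ ≤ K * (t - s)^γ := by
        refine le_trans (hδ xj x1 t h0xj hxjx1 hx1t htT) ?_
        exact mul_le_mul_of_nonneg_left
          (Real.rpow_le_rpow (by linarith) (by linarith) hγ0) hK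
      have key : RS A L - A s t = (RS A L₁ - A s xj) + (RS A L₂ - A x1 t)
          - (A s t - A s xj - A xj t) - (A xj t - A xj x1 - A x1 t) := by
        rw [hRS]; abel
      have tri : ‖RS A L - A s t‖ ≤ ‖RS A L₁ - A s xj‖ + ‖RS A L₂ - A x1 t‖
          + ‖A s t - A s xj - A xj t‖ + ‖A xj t - A xj x1 - A x1 t‖ := by
        rw [key]
        refine le_trans (norm_sub_le _ _) ?_
        refine add_le_add_left (le_trans (norm_sub_le _ _) (add_le_add_left (norm_add_le _ _) _)) _
      have hhalf : ((t - s)/2)^γ = (t-s)^γ / 2^γ := Real.div_rpow (by linarith) (by norm_num) γ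
      have hb₁ : c * K * (xj - s)^γ ≤ c * K * ((t-s)^γ / 2^γ) := by
        rw [← hhalf]
        refine mul_le_mul_of_nonneg_left
          (Real.rpow_le_rpow (by linarith) (by rw [hm] at hxjm; linarith) hγ0)
          (by positivity)
      have hb₂ : c * K * (t - x1)^γ ≤ c * K * ((t-s)^γ / 2^γ) := by
        rw [← hhalf]
        refine mul_le_mul_of_nonneg_left
          (Real.rpow_le_rpow (by linarith) (by rw [hm] at hx1m; linarith) hγ0)
          (by positivity)
      have hsum : c * K * ((t-s)^γ / 2^γ) + c * K * ((t-s)^γ / 2^γ)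
          + K * (t-s)^γ + K * (t-s)^γ = c * K * (t-s)^γ := by
        have h2γpos : (0:ℝ) < 2^γ := Real.rpow_pos_of_pos two_pos γ
        have e1 : c * K * ((t-s)^γ / 2^γ) + c * K * ((t-s)^γ / 2^γ)
            = (c * (2/2^γ)) * K * (t-s)^γ := by field_simp; ring
        rw [e1, hq]
        have h2 : c * (2:ℝ)^(1-γ) = c - 2 := by linarith
        rw [h2]; ring
      calc ‖RS A L - A s t‖
          ≤ ‖RS A L₁ - A s xj‖ + ‖RS A L₂ - A x1 t‖
            + ‖A s t - A s xj - A xj t‖ + ‖A xj t - A xj x1 - A x1 t‖ := tri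
        _ ≤ c * K * ((t-s)^γ / 2^γ) + c * K * ((t-s)^γ / 2^γ)
            + K * (t-s)^γ + K * (t-s)^γ := by
            refine add_le_add (add_le_add (add_le_add ?_ ?_) hE1) hE2
            · exact le_trans IH₁ hb₁
            · exact le_trans IH₂ hb₂
        _ = c * K * (t-s)^γ := hsum

lemma drop_lt {y : ℝ} {l : List ℝ} : ∀ (B M₂ : List ℝ), (∀ b ∈ B, b < y) →
    (y :: l) <+ (B ++ M₂) → (y :: l) <+ M₂ := by
  intro B
  induction B with
  | nil => intro M₂ _ h; exact h
  | cons b B ih =>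
    intro M₂ hb h
    cases h with
    | cons _ h' => exact ih M₂ (fun z hz => hb z (by simp [hz])) h'
    | cons_cons _ h' => exact absurd (hb y (by simp)) (lt_irrefl _)

lemma refine_est (A : ℝ → ℝ → E) {K γ T : ℝ} (hγ : 1 < γ) (hK : 0 ≤ K)
    (hδ : ∀ s u t : ℝ, 0 ≤ s → s ≤ u → u ≤ t → t ≤ T → ‖A s t - A s u - A u t‖ ≤ K * (t-s)^γ) :
    ∀ (L M : List ℝ), List.Pairwise (· < ·) L → List.Pairwise (· < ·) M → L <+ M →
    (∀ x ∈ M, x ∈ Icc (0:ℝ) T) → ∀ (hL : L ≠ []) (hM : M ≠ []),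
    L.head hL = M.head hM → L.getLast hL = M.getLast hM →
    ‖RS A M - RS A L‖ ≤ (2 / (1 - 2^(1-γ))) * K * RS (fun x y => (y - x)^γ) L := by
  intro L
  induction L with
  | nil => intro M _ _ _ _ hL; exact absurd rfl hL
  | cons x L' ih =>
    intro M hsL hsM hsub hmem hL hM hhead hlast
    cases L' with
    | nil =>
      cases M with
      | nil => exact absurd rfl hM
      | cons b M' =>
        have hxb : x = b := hhead
        cases M' with
        | nil =>
          subst hxb
          simp only [RS_single, sub_zero, norm_zero]
          norm_num
        | cons b2 M'' =>
          exfalso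
          have hgl : (b :: b2 :: M'').getLast hM ∈ b2 :: M'' := by
            rw [List.getLast_cons (by simp : (b2 :: M'' : List ℝ) ≠ [])]
            exact List.getLast_mem _
          have hblt : b < (b :: b2 :: M'').getLast hM :=
            List.rel_of_pairwise_cons hsM hgl
          have hx : x = (b :: b2 :: M'').getLast hM := hlast
          rw [← hx, hxb] at hblt
          exact lt_irrefl _ hblt
    | cons y l =>
      obtain ⟨m0, M', rfl⟩ : ∃ m0 M', M = m0 :: M' := by
        cases M with
        | nil => exact absurd rfl hM
        | cons a M' => exact ⟨a, M', rfl⟩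
      have hm0 : x = m0 := hhead
      subst hm0
      have hsub' : (y :: l) <+ M' := List.cons_sublist_cons.mp hsub
      have hyM' : y ∈ M' := hsub'.subset (by simp)
      obtain ⟨B, C, rfl⟩ := List.append_of_mem hyM'
      have hsM' : List.Pairwise (· < ·) (B ++ y :: C) := hsM.of_cons
      have hBy : ∀ b ∈ B, b < y := by
        have hpa := (List.pairwise_append.mp hsM').2.2
        exact fun b hb => hpa b hb y (by simp)
      have hsub'' : (y :: l) <+ (y :: C) := drop_lt B (y :: C) hBy hsub'
      have hblock_sub : ((x :: B) ++ [y]) <+ (x :: (B ++ y :: C)) := by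
        rw [List.cons_append]
        exact List.cons_sublist_cons.mpr
          (List.Sublist.append_left (List.cons_sublist_cons.mpr (List.nil_sublist C)) B)
      have hblock_sorted : List.Pairwise (· < ·) ((x :: B) ++ [y]) :=
        List.Pairwise.sublist hblock_sub hsM
      have hchain : List.Chain' (· ≤ ·) ((x :: B) ++ [y]) :=
        List.isChain_iff_pairwise.mpr (hblock_sorted.imp le_of_lt)
      have hmem_blk : ∀ z ∈ (x :: B) ++ [y], z ∈ Icc (0:ℝ) T :=
        fun z hz => hmem z (hblock_sub.subset hz)
      have hbne : ((x :: B) ++ [y] : List ℝ) ≠ [] := by simp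
      have Hmax := maximal A hγ hK hδ ((x :: B) ++ [y]) hchain hmem_blk hbne
      have hbh : ((x :: B) ++ [y]).head hbne = x := head_append_left (by simp) hbne
      have hbl : ((x :: B) ++ [y]).getLast hbne = y := List.getLast_concat
      rw [hbh, hbl] at Hmax
      have hRSM : RS A (x :: (B ++ y :: C)) = RS A ((x :: B) ++ [y]) + RS A (y :: C) := by
        have e1 := RS_append A (x :: B) (y :: C) (by simp) (by simp)
        have e2 := RS_append A (x :: B) [y] (by simp) (by simp)
        rw [show (x :: (B ++ y :: C) : List ℝ) = (x :: B) ++ (y :: C) from by simp, e1, e2]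
        simp only [List.head_cons, RS_single]
        abel
      have hyl_ne : (y :: l : List ℝ) ≠ [] := by simp
      have hyC_ne : (y :: C : List ℝ) ≠ [] := by simp
      have hsyC : List.Pairwise (· < ·) (y :: C) := by
        refine List.Pairwise.sublist ?_ hsM
        exact (List.sublist_append_right B (y :: C)).cons x
      have hmem' : ∀ z ∈ (y :: C), z ∈ Icc (0:ℝ) T := by
        intro z hz
        refine hmem z ?_
        exact ((List.sublist_append_right B (y :: C)).cons x).subset hz
      have hlast' : (y :: l).getLast hyl_ne = (y :: C).getLast hyC_ne := by
        have h1 : (x :: y :: l).getLast hL = (y :: l).getLast hyl_ne :=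
          List.getLast_cons hyl_ne
        have h2 : (x :: (B ++ y :: C)).getLast hM = (y :: C).getLast hyC_ne :=
          (getLast_congr (by simp) hM (by simp : ((x :: B) ++ (y :: C) : List ℝ) ≠ [])).trans
            (getLast_append_right hyC_ne _)
        rw [← h1, hlast, h2]
      have IH' := ih (y :: C) hsL.of_cons hsyC hsub'' hmem' hyl_ne hyC_ne rfl hlast'
      have keyM : RS A (x :: (B ++ y :: C)) - RS A (x :: y :: l)
          = (RS A ((x :: B) ++ [y]) - A x y) + (RS A (y :: C) - RS A (y :: l)) := by
        rw [hRSM, RS_cons_cons]; abel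
      calc ‖RS A (x :: (B ++ y :: C)) - RS A (x :: y :: l)‖
          ≤ ‖RS A ((x :: B) ++ [y]) - A x y‖ + ‖RS A (y :: C) - RS A (y :: l)‖ := by
            rw [keyM]; exact norm_add_le _ _
        _ ≤ (2 / (1 - 2^(1-γ))) * K * (y - x)^γ
            + (2 / (1 - 2^(1-γ))) * K * RS (fun a b => (b - a)^γ) (y :: l) :=
            add_le_add Hmax IH'
        _ = (2 / (1 - 2^(1-γ))) * K * RS (fun a b => (b - a)^γ) (x :: y :: l) := by
            rw [RS_cons_cons]; ring

lemma compare (A : ℝ → ℝ → E) {K γ T : ℝ} (hγ : 1 < γ) (hK : 0 ≤ K)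
    (hδ : ∀ s u t : ℝ, 0 ≤ s → s ≤ u → u ≤ t → t ≤ T → ‖A s t - A s u - A u t‖ ≤ K * (t-s)^γ)
    (P Q : List ℝ) (hchP : List.Chain' (· ≤ ·) P) (hchQ : List.Chain' (· ≤ ·) Q)
    (hmemP : ∀ x ∈ P, x ∈ Icc (0:ℝ) T) (hmemQ : ∀ x ∈ Q, x ∈ Icc (0:ℝ) T)
    (hP : P ≠ []) (hQ : Q ≠ []) (hhead : P.head hP = Q.head hQ)
    (hlast : P.getLast hP = Q.getLast hQ) :
    ‖RS A P - RS A Q‖ ≤ (2 / (1 - 2^(1-γ))) * K *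
      (RS (fun a b => (b-a)^γ) P + RS (fun a b => (b-a)^γ) Q) := by
  classical
  have hsP : List.Pairwise (· ≤ ·) P := List.isChain_iff_pairwise.mp hchP
  have hsQ : List.Pairwise (· ≤ ·) Q := List.isChain_iff_pairwise.mp hchQ
  set P' := dd P with hP'
  set Q' := dd Q with hQ'
  have hP'ne : P' ≠ [] := dd_ne_nil hP
  have hQ'ne : Q' ≠ [] := dd_ne_nil hQ
  set R := ((P' ++ Q').toFinset).sort (· ≤ ·) with hR
  have hmemR : ∀ x, x ∈ R ↔ (x ∈ P' ∨ x ∈ Q') := by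
    intro x
    rw [hR, Finset.mem_sort, List.mem_toFinset, List.mem_append]
  have hsR : List.Pairwise (· < ·) R := List.sortedLT_iff_pairwise.mp (Finset.sortedLT_sort _)
  have hsortR : List.Pairwise (· ≤ ·) R := Finset.pairwise_sort _ _
  have hsmemR : P'.head hP'ne ∈ R := (hmemR _).mpr (Or.inl (List.head_mem _))
  have hRne : R ≠ [] := List.ne_nil_of_mem hsmemR
  have hsubP : P' <+ R := sublist_of_subset_sorted R P' (dd_sorted P hchP) hsR
    (fun x hx => (hmemR x).mpr (Or.inl hx))
  have hsubQ : Q' <+ R := sublist_of_subset_sorted R Q' (dd_sorted Q hchQ) hsR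
    (fun x hx => (hmemR x).mpr (Or.inr hx))
  have hmemRIcc : ∀ x ∈ R, x ∈ Icc (0:ℝ) T := by
    intro x hx
    rcases (hmemR x).mp hx with h | h
    · exact hmemP x ((dd_sublist P).subset h)
    · exact hmemQ x ((dd_sublist Q).subset h)
  set s := P.head hP with hs
  set τ := P.getLast hP with hτ
  have hsall : ∀ x ∈ R, s ≤ x := by
    intro x hx
    rcases (hmemR x).mp hx with h | h
    · exact sorted_head_le hsP hP ((dd_sublist P).subset h)
    · rw [hhead]; exact sorted_head_le hsQ hQ ((dd_sublist Q).subset h)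
  have hτall : ∀ x ∈ R, x ≤ τ := by
    intro x hx
    rcases (hmemR x).mp hx with h | h
    · exact sorted_le_getLast hsP hP ((dd_sublist P).subset h)
    · rw [hlast]; exact sorted_le_getLast hsQ hQ ((dd_sublist Q).subset h)
  have hsinR : s ∈ R := by
    have : P'.head hP'ne = s := dd_head P hP
    rw [← this]; exact hsmemR
  have hτinR : τ ∈ R := by
    have : P'.getLast hP'ne = τ := dd_getLast P hP
    rw [← this]
    exact (hmemR _).mpr (Or.inl (List.getLast_mem _))
  have hheadR : R.head hRne = s :=
    le_antisymm (sorted_head_le hsortR hRne hsinR) (hsall _ (List.head_mem _))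
  have hlastR : R.getLast hRne = τ :=
    le_antisymm (hτall _ (List.getLast_mem _)) (sorted_le_getLast hsortR hRne hτinR)
  have hheadP' : P'.head hP'ne = R.head hRne := by rw [hheadR]; exact dd_head P hP
  have hlastP' : P'.getLast hP'ne = R.getLast hRne := by rw [hlastR]; exact dd_getLast P hP
  have hheadQ' : Q'.head hQ'ne = R.head hRne := by
    rw [hheadR, dd_head Q hQ, ← hhead]
  have hlastQ' : Q'.getLast hQ'ne = R.getLast hRne := by
    rw [hlastR, dd_getLast Q hQ, ← hlast]
  have h1 := refine_est A hγ hK hδ P' R (dd_sorted P hchP) hsR hsubP hmemRIcc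
    hP'ne hRne hheadP' hlastP'
  have h2 := refine_est A hγ hK hδ Q' R (dd_sorted Q hchQ) hsR hsubQ hmemRIcc
    hQ'ne hRne hheadQ' hlastQ'
  have hdiagP : ∀ x ∈ P, A x x = 0 := fun x hx => A_diag A hγ hδ (hmemP x hx)
  have hdiagQ : ∀ x ∈ Q, A x x = 0 := fun x hx => A_diag A hγ hδ (hmemQ x hx)
  have hγ0 : γ ≠ 0 := by linarith
  have hdiagpow : ∀ (l : List ℝ), ∀ x ∈ l, (fun a b => (b - a)^γ) x x = 0 := by
    intro l x _
    simp only [sub_self]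
    exact Real.zero_rpow hγ0
  have eP : RS A P' = RS A P := RS_dd A P hdiagP
  have eQ : RS A Q' = RS A Q := RS_dd A Q hdiagQ
  have ePp : RS (fun a b => (b-a)^γ) P' = RS (fun a b => (b-a)^γ) P :=
    RS_dd _ P (hdiagpow P)
  have eQp : RS (fun a b => (b-a)^γ) Q' = RS (fun a b => (b-a)^γ) Q :=
    RS_dd _ Q (hdiagpow Q)
  rw [eP, ePp] at h1
  rw [eQ, eQp] at h2
  calc ‖RS A P - RS A Q‖
      = ‖(RS A R - RS A Q) - (RS A R - RS A P)‖ := by abel_nf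
    _ ≤ ‖RS A R - RS A Q‖ + ‖RS A R - RS A P‖ := norm_sub_le _ _
    _ ≤ (2 / (1 - 2^(1-γ))) * K * RS (fun a b => (b-a)^γ) Q
        + (2 / (1 - 2^(1-γ))) * K * RS (fun a b => (b-a)^γ) P := add_le_add h2 h1
    _ = (2 / (1 - 2^(1-γ))) * K *
        (RS (fun a b => (b-a)^γ) P + RS (fun a b => (b-a)^γ) Q) := by ring

lemma compare_sums (A : ℝ → ℝ → E) {K γ T : ℝ} (hγ : 1 < γ) (hK : 0 ≤ K)
    (hδ : ∀ s u t : ℝ, 0 ≤ s → s ≤ u → u ≤ t → t ≤ T → ‖A s t - A s u - A u t‖ ≤ K * (t-s)^γ)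
    (p : ℕ → ℝ) (k : ℕ) (q : ℕ → ℝ) (m : ℕ)
    (hp : ∀ i < k, p i ≤ p (i+1)) (hq : ∀ i < m, q i ≤ q (i+1))
    (hpI : ∀ i ≤ k, p i ∈ Icc (0:ℝ) T) (hqI : ∀ i ≤ m, q i ∈ Icc (0:ℝ) T)
    (h0 : p 0 = q 0) (h1 : p k = q m) :
    ‖(∑ i ∈ Finset.range k, A (p i) (p (i+1))) - ∑ i ∈ Finset.range m, A (q i) (q (i+1))‖
      ≤ (2 / (1 - 2^(1-γ))) * K *
        ((∑ i ∈ Finset.range k, (p (i+1) - p i)^γ) + ∑ i ∈ Finset.range m, (q (i+1) - q i)^γ) := by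
  set LP := (List.range (k+1)).map p with hLP
  set LQ := (List.range (m+1)).map q with hLQ
  have hLPne : LP ≠ [] := range_map_ne_nil p k
  have hLQne : LQ ≠ [] := range_map_ne_nil q m
  have hchP : List.Chain' (· ≤ ·) LP := by
    rw [hLP]; show List.IsChain _ _; rw [List.isChain_map]
    exact (List.isChain_range_succ (fun a b => p a ≤ p b) k).mpr hp
  have hchQ : List.Chain' (· ≤ ·) LQ := by
    rw [hLQ]; show List.IsChain _ _; rw [List.isChain_map]
    exact (List.isChain_range_succ (fun a b => q a ≤ q b) m).mpr hq
  have hmemP : ∀ x ∈ LP, x ∈ Icc (0:ℝ) T := by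
    intro x hx
    rw [hLP, List.mem_map] at hx
    obtain ⟨i, hi, rfl⟩ := hx
    exact hpI i (by rw [List.mem_range] at hi; omega)
  have hmemQ : ∀ x ∈ LQ, x ∈ Icc (0:ℝ) T := by
    intro x hx
    rw [hLQ, List.mem_map] at hx
    obtain ⟨i, hi, rfl⟩ := hx
    exact hqI i (by rw [List.mem_range] at hi; omega)
  have hhead : LP.head hLPne = LQ.head hLQne := by
    rw [head_range_map p k, head_range_map q m]; exact h0
  have hlast : LP.getLast hLPne = LQ.getLast hLQne := by
    rw [getLast_range_map p k, getLast_range_map q m]; exact h1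
  have h := compare A hγ hK hδ LP LQ hchP hchQ hmemP hmemQ hLPne hLQne hhead hlast
  rw [hLP, hLQ, RS_range_map, RS_range_map, RS_range_map, RS_range_map] at h
  exact h


lemma sum_pow_le {γ : ℝ} (hγ : 1 < γ) (p : ℕ → ℝ) (k : ℕ) (δ : ℝ) (hδ0 : 0 ≤ δ)
    (hp : ∀ i < k, p i ≤ p (i+1)) (hd : ∀ i < k, p (i+1) - p i ≤ δ) :
    ∑ i ∈ Finset.range k, (p (i+1) - p i)^γ ≤ δ^(γ-1) * (p k - p 0) := by
  have hterm : ∀ i ∈ Finset.range k, (p (i+1) - p i)^γ ≤ δ^(γ-1) * (p (i+1) - p i) := by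
    intro i hi
    rw [Finset.mem_range] at hi
    have h0 : 0 ≤ p (i+1) - p i := by linarith [hp i hi]
    have hle : p (i+1) - p i ≤ δ := hd i hi
    have e : (p (i+1) - p i) ^ γ = (p (i+1) - p i)^(γ-1) * (p (i+1) - p i) := by
      have h2 := Real.rpow_add_of_nonneg h0 (by linarith : (0:ℝ) ≤ γ - 1) zero_le_one
      rw [show γ - 1 + 1 = γ from by ring] at h2
      rw [h2, Real.rpow_one]
    rw [e]
    exact mul_le_mul_of_nonneg_right (Real.rpow_le_rpow h0 hle (by linarith)) h0
  calc ∑ i ∈ Finset.range k, (p (i+1) - p i)^γ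
      ≤ ∑ i ∈ Finset.range k, δ^(γ-1) * (p (i+1) - p i) := Finset.sum_le_sum hterm
    _ = δ^(γ-1) * (p k - p 0) := by rw [← Finset.mul_sum, Finset.sum_range_sub]

lemma unif_tendsto {γ : ℝ} (hγ : 1 < γ) (a : ℝ) :
    Tendsto (fun m : ℕ => (a/(m+1))^(γ-1)) atTop (nhds 0) := by
  have h1 : Tendsto (fun m : ℕ => ((m:ℝ)+1)) atTop atTop :=
    tendsto_atTop_add_const_right _ 1 tendsto_natCast_atTop_atTop
  have h3 : Tendsto (fun m : ℕ => a/(m+1)) atTop (nhds 0) := by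
    have h2 := (h1.inv_tendsto_atTop).const_mul a
    simpa [div_eq_mul_inv] using h2
  have hco : ContinuousAt (fun x : ℝ => x^(γ-1)) 0 :=
    Real.continuousAt_rpow_const 0 (γ-1) (Or.inr (by linarith))
  have h4 := hco.tendsto.comp h3
  rw [Real.zero_rpow (by linarith : γ - 1 ≠ 0)] at h4
  exact h4

theorem abstract_sewing {F : Type*} [NormedAddCommGroup F] [CompleteSpace F]
    (A : ℝ → ℝ → F) (K γ T : ℝ) (hγ : 1 < γ) (hK : 0 ≤ K) (hT : 0 ≤ T)
    (hδ : ∀ s u t : ℝ, 0 ≤ s → s ≤ u → u ≤ t → t ≤ T →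
      ‖A s t - A s u - A u t‖ ≤ K * (t-s)^γ) :
    ∃ I : ℝ → F, I 0 = 0 ∧ ∀ t ∈ Icc (0:ℝ) T, IsPartitionLimit 0 t A (I t) := by
  classical
  haveI : Nonempty F := ⟨0⟩
  have h2lt : (2:ℝ)^(1-γ) < 1 := Real.rpow_lt_one_of_one_lt_of_neg one_lt_two (by linarith)
  have hden : 0 < 1 - (2:ℝ)^(1-γ) := by linarith
  set c := 2 / (1 - (2:ℝ)^(1-γ)) with hc
  have hcpos : 0 < c := by positivity
  -- uniform partitions
  set u : ℝ → ℕ → ℕ → ℝ := fun t n i => t * i / (n+1) with hu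
  set g : ℝ → ℕ → F := fun t n => ∑ i ∈ Finset.range (n+1), A (u t n i) (u t n (i+1)) with hg
  set I : ℝ → F := fun t => limUnder atTop (g t) with hI
  have hu0 : ∀ t n, u t n 0 = 0 := by intro t n; simp [hu]
  have huk : ∀ t n, u t n (n+1) = t := by
    intro t n
    rw [hu]
    have : ((n:ℝ)+1) ≠ 0 := Nat.cast_add_one_ne_zero n
    field_simp
    rw [Nat.cast_add_one]
  have humono : ∀ t, 0 ≤ t → ∀ n, ∀ i < n+1, u t n i ≤ u t n (i+1) := by
    intro t ht n i _
    rw [hu]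
    have hpos : (0:ℝ) < (n:ℝ)+1 := by positivity
    refine (div_le_div_iff_of_pos_right hpos).mpr ?_
    have : ((i:ℝ)) ≤ ((i:ℝ)+1) := by linarith
    calc t * i ≤ t * ((i:ℝ)+1) := mul_le_mul_of_nonneg_left this ht
      _ = t * ((i+1 : ℕ) : ℝ) := by push_cast; ring
  have huI : ∀ t, 0 ≤ t → t ≤ T → ∀ n, ∀ i ≤ n+1, u t n i ∈ Icc (0:ℝ) T := by
    intro t ht htT n i hi
    have hpos : (0:ℝ) < (n:ℝ)+1 := by positivity
    constructor
    · rw [hu]; positivity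
    · rw [hu]
      have h1 : t * i / (n+1) ≤ t := by
        rw [div_le_iff₀ hpos]
        have hic : ((i:ℝ)) ≤ ((n:ℝ)+1) := by
          have := (Nat.cast_le (α := ℝ)).mpr hi
          push_cast at this; linarith
        calc t * i ≤ t * ((n:ℝ)+1) := mul_le_mul_of_nonneg_left hic ht
          _ = t * ((n:ℝ)+1) := rfl
      linarith
  have hudiff : ∀ t n i, u t n (i+1) - u t n i = t/(n+1) := by
    intro t n i
    rw [hu]
    have : ((n:ℝ)+1) ≠ 0 := Nat.cast_add_one_ne_zero n
    field_simp
    push_cast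
    ring
  -- Riemann sum of uniform partition bound
  have hPSu : ∀ t, 0 ≤ t → ∀ n, ∑ i ∈ Finset.range (n+1), (u t n (i+1) - u t n i)^γ
      ≤ (t/(n+1))^(γ-1) * t := by
    intro t ht n
    have := sum_pow_le hγ (u t n) (n+1) (t/(n+1)) (by positivity)
      (humono t ht n) (fun i _ => le_of_eq (hudiff t n i))
    rw [huk, hu0] at this
    simpa using this
  -- the g sequence is Cauchy for t ∈ [0,T]
  have hglim : ∀ t, 0 ≤ t → t ≤ T → Tendsto (g t) atTop (nhds (I t)) := by
    intro t ht htT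
    have hcauchy : CauchySeq (g t) := by
      refine cauchySeq_of_le_tendsto_0 (fun N => c * K * ((t/(N+1))^(γ-1) * t + (t/(N+1))^(γ-1) * t)) ?_ ?_
      · intro n m N hn hm
        rw [dist_eq_norm]
        have hcmp := compare_sums A hγ hK hδ (u t n) (n+1) (u t m) (m+1)
          (humono t ht n) (humono t ht m) (huI t ht htT n) (huI t ht htT m)
          (by rw [hu0, hu0]) (by rw [huk, huk])
        rw [← hc] at hcmp
        refine le_trans hcmp ?_
        have hmono_level : ∀ j : ℕ, N ≤ j → (t/(j+1))^(γ-1) * t ≤ (t/(N+1))^(γ-1) * t := by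
          intro j hj
          refine mul_le_mul_of_nonneg_right ?_ ht
          refine Real.rpow_le_rpow (by positivity) ?_ (by linarith)
          refine div_le_div_of_nonneg_left ht (by positivity) ?_
          have : ((N:ℝ)) ≤ (j:ℝ) := Nat.cast_le.mpr hj
          linarith
        have b1 := le_trans (hPSu t ht n) (hmono_level n hn)
        have b2 := le_trans (hPSu t ht m) (hmono_level m hm)
        have hck : 0 ≤ c * K := by positivity
        exact mul_le_mul_of_nonneg_left (add_le_add b1 b2) hck
      · have h1 := ((unif_tendsto hγ t).mul_const t)
        have h2 : Tendsto (fun N : ℕ => (t/(N+1))^(γ-1) * t + (t/(N+1))^(γ-1) * t)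
            atTop (nhds 0) := by simpa using h1.add h1
        have h3 := h2.const_mul (c * K)
        simpa using h3
    obtain ⟨L, hL⟩ := cauchySeq_tendsto_of_complete hcauchy
    have hIt : I t = L := hL.limUnder_eq
    rwa [hIt]
  -- I 0 = 0
  have hI0 : I 0 = 0 := by
    have hg0 : g 0 = fun _ => 0 := by
      funext n
      rw [hg]
      refine Finset.sum_eq_zero ?_
      intro i _
      have e1 : u 0 n i = 0 := by rw [hu]; simp
      have e2 : u 0 n (i+1) = 0 := by rw [hu]; simp
      rw [e1, e2]
      exact A_diag A hγ hδ ⟨le_refl 0, hT⟩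
    show limUnder atTop (g 0) = 0
    rw [hg0]
    exact Tendsto.limUnder_eq tendsto_const_nhds
  refine ⟨I, hI0, ?_⟩
  intro t ht
  intro p k mesh hp0 hpk hmono hmeshb hmesh0
  by_cases ht0 : t = 0
  · subst ht0
    have hzero : (fun n => ∑ i ∈ Finset.range (k n), A (p n i) (p n (i+1))) = fun _ => 0 := by
      funext n
      refine Finset.sum_eq_zero ?_
      intro i hi
      rw [Finset.mem_range] at hi
      have hall : ∀ j ≤ k n, p n j = 0 := by
        intro j hj
        have h1 : p n 0 ≤ p n j := mono_of_steps (hmono n) 0 j (Nat.zero_le _) hj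
        have h2 : p n j ≤ p n (k n) := mono_of_steps (hmono n) j (k n) hj le_rfl
        rw [hp0 n] at h1
        rw [hpk n] at h2
        linarith
      rw [hall i (by omega), hall (i+1) (by omega)]
      exact A_diag A hγ hδ ⟨le_refl 0, hT⟩
    rw [hzero, hI0]
    exact tendsto_const_nhds
  · have htpos : 0 < t := lt_of_le_of_ne ht.1 (Ne.symm ht0)
    have htT : t ≤ T := ht.2
    have hk1 : ∀ n, 1 ≤ k n := by
      intro n
      rcases Nat.eq_zero_or_pos (k n) with h0 | h1
      · exfalso; apply ht0; rw [← hpk n, h0, hp0 n]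
      · exact h1
    have hmesh_nn : ∀ n, 0 ≤ mesh n := by
      intro n
      have h1 := hmono n 0 (hk1 n)
      have h2 := hmeshb n 0 (hk1 n)
      linarith
    have hpIcc : ∀ n, ∀ i ≤ k n, p n i ∈ Icc (0:ℝ) T := by
      intro n i hi
      have h1 : p n 0 ≤ p n i := mono_of_steps (hmono n) 0 i (Nat.zero_le _) hi
      have h2 : p n i ≤ p n (k n) := mono_of_steps (hmono n) i (k n) hi le_rfl
      rw [hp0 n] at h1
      rw [hpk n] at h2
      exact ⟨h1, le_trans h2 htT⟩
    have hg' := hglim t ht.1 htT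
    rw [Metric.tendsto_atTop]
    intro ε hε
    -- choose m
    have e1 : ∀ᶠ m in atTop, dist (g t m) (I t) < ε/3 :=
      hg'.eventually (by
        have : ∀ᶠ x in nhds (I t), dist x (I t) < ε/3 := by
          have := Metric.ball_mem_nhds (I t) (by linarith : (0:ℝ) < ε/3)
          filter_upwards [this] with x hx using hx
        exact this)
    have e2 : ∀ᶠ m : ℕ in atTop, c * K * ((t/(m+1))^(γ-1) * t) < ε/3 := by
      have h1 := (((unif_tendsto hγ t).mul_const t).const_mul (c*K))
      simp only [zero_mul, mul_zero] at h1
      exact h1.eventually (gt_mem_nhds (by linarith : (0:ℝ) < ε/3))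
    obtain ⟨m, hm1, hm2⟩ := (e1.and e2).exists
    -- choose N
    have e3 : ∀ᶠ n in atTop, c * K * ((mesh n)^(γ-1) * t) < ε/3 := by
      have hco : ContinuousAt (fun x : ℝ => x^(γ-1)) 0 :=
        Real.continuousAt_rpow_const 0 (γ-1) (Or.inr (by linarith))
      have h4 := hco.tendsto.comp hmesh0
      rw [Real.zero_rpow (by linarith : γ - 1 ≠ 0)] at h4
      have h5 := (h4.mul_const t).const_mul (c*K)
      simp only [zero_mul, mul_zero] at h5
      exact h5.eventually (gt_mem_nhds (by linarith : (0:ℝ) < ε/3))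
    obtain ⟨N, hN⟩ := eventually_atTop.mp e3
    refine ⟨N, fun n hn => ?_⟩
    have hcmp := compare_sums A hγ hK hδ (p n) (k n) (u t m) (m+1)
      (hmono n) (humono t ht.1 m) (hpIcc n) (huI t ht.1 htT m)
      (by rw [hp0 n, hu0]) (by rw [hpk n, huk])
    rw [← hc] at hcmp
    have hPSp : ∑ i ∈ Finset.range (k n), (p n (i+1) - p n i)^γ ≤ (mesh n)^(γ-1) * t := by
      have := sum_pow_le hγ (p n) (k n) (mesh n) (hmesh_nn n) (hmono n) (hmeshb n)
      rw [hpk n, hp0 n, sub_zero] at this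
      exact this
    have hPSq := hPSu t ht.1 m
    have hck : 0 ≤ c * K := by positivity
    have hbound : ‖(∑ i ∈ Finset.range (k n), A (p n i) (p n (i+1))) - g t m‖
        ≤ c * K * ((mesh n)^(γ-1) * t) + c * K * ((t/(m+1))^(γ-1) * t) := by
      refine le_trans hcmp ?_
      have := mul_le_mul_of_nonneg_left (add_le_add hPSp hPSq) hck
      linarith [this]
    have htri := dist_triangle (∑ i ∈ Finset.range (k n), A (p n i) (p n (i+1))) (g t m) (I t)
    rw [dist_eq_norm (∑ i ∈ Finset.range (k n), A (p n i) (p n (i+1))) (g t m)] at htri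
    have hNn := hN n hn
    calc dist (∑ i ∈ Finset.range (k n), A (p n i) (p n (i+1))) (I t)
        ≤ ‖(∑ i ∈ Finset.range (k n), A (p n i) (p n (i+1))) - g t m‖ + dist (g t m) (I t) := htri
      _ < (c * K * ((mesh n)^(γ-1) * t) + c * K * ((t/(m+1))^(γ-1) * t)) + ε/3 := by
          have := lt_of_le_of_lt (le_refl (dist (g t m) (I t))) hm1
          exact add_lt_add_of_le_of_lt hbound hm1
      _ < ε/3 + ε/3 + ε/3 := by
          have := add_lt_add hNn hm2
          linarith
      _ = ε := by ring

end RPAux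

set_option maxHeartbeats 1000000 in
/-- Integration of a controlled path `(Y, Y')` (values in
`L(W, U')`) against a controlled path `(Z, Z')` (values in `W`): the germ
`Ξ_{st} = Y_s Z_{st} + (Y'_s · Z'_s) 𝕏_{st}`, with
`(Y'_s · Z'_s)(v ⊗ v') = Y'_s(v)(Z'_s(v'))` (modelled by `M s : VV →L U'`),
satisfies the stated coherence bound, and consequently (sewing) the integral
`∫_0^t Y d_X Z = lim Σ (Y_u Z_{uv} + (Y'_u·Z'_u)𝕏_{uv})` exists. -/
theorem controlled_vs_controlled_integral {U' V W VV : Type*}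
    [NormedAddCommGroup U'] [NormedSpace ℝ U'] [CompleteSpace U']
    [NormedAddCommGroup V] [NormedSpace ℝ V]
    [NormedAddCommGroup W] [NormedSpace ℝ W]
    [NormedAddCommGroup VV] [NormedSpace ℝ VV]
    (tensor : V →L[ℝ] V →L[ℝ] VV)
    (htensor_norm : ∀ x y : V, ‖tensor x y‖ ≤ ‖x‖ * ‖y‖)
    (α T : ℝ) (hα1 : 1/3 < α) (hα2 : α ≤ 1/2) (hT : 0 < T)
    (X : ℝ → V) (XX : ℝ → ℝ → VV) (CX CXX : ℝ)
    (hX : ∀ s t : ℝ, 0 ≤ s → s ≤ t → t ≤ T →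
      ‖X t - X s‖ ≤ CX * |t - s| ^ α)
    (hXX : ∀ s t : ℝ, 0 ≤ s → s ≤ t → t ≤ T →
      ‖XX s t‖ ≤ CXX * |t - s| ^ (2*α))
    (chen : ∀ s u t : ℝ, 0 ≤ s → s ≤ u → u ≤ t → t ≤ T →
      XX s t = XX s u + XX u t + tensor (X u - X s) (X t - X u))
    -- the controlled path (Y, Y') with values in L(W, U')
    (Y : ℝ → W →L[ℝ] U') (Y' : ℝ → V →L[ℝ] W →L[ℝ] U')
    (CY MY' CRY : ℝ)
    (hY : ∀ s t : ℝ, 0 ≤ s → s ≤ t → t ≤ T → ‖Y t - Y s‖ ≤ CY * |t - s| ^ α)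
    (hY'bdd : ∀ t : ℝ, 0 ≤ t → t ≤ T → ‖Y' t‖ ≤ MY')
    (hRY : ∀ s t : ℝ, 0 ≤ s → s ≤ t → t ≤ T →
      ‖Y t - Y s - Y' s (X t - X s)‖ ≤ CRY * |t - s| ^ (2*α))
    -- the controlled path (Z, Z') with values in W
    (Z : ℝ → W) (Z' : ℝ → V →L[ℝ] W) (CZ' MZ' CRZ : ℝ)
    (hZ' : ∀ s t : ℝ, 0 ≤ s → s ≤ t → t ≤ T →
      ‖Z' t - Z' s‖ ≤ CZ' * |t - s| ^ α)
    (hZ'bdd : ∀ t : ℝ, 0 ≤ t → t ≤ T → ‖Z' t‖ ≤ MZ')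
    (hRZ : ∀ s t : ℝ, 0 ≤ s → s ≤ t → t ≤ T →
      ‖Z t - Z s - Z' s (X t - X s)‖ ≤ CRZ * |t - s| ^ (2*α))
    -- the product `Y'·Z'` realised on `V ⊗ V`, with its α-Hölder constant
    (M : ℝ → VV →L[ℝ] U') (CM : ℝ)
    (hM : ∀ s : ℝ, ∀ v v' : V, M s (tensor v v') = Y' s v (Z' s v'))
    (hMholder : ∀ s t : ℝ, 0 ≤ s → s ≤ t → t ≤ T →
      ‖M t - M s‖ ≤ CM * |t - s| ^ α) :
    -- coherence bound for the germ, with C depending only on α and T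
    (∃ C : ℝ, ∀ s u t : ℝ, 0 ≤ s → s ≤ u → u ≤ t → t ≤ T →
      ‖(Y s (Z t - Z s) + M s (XX s t)) -
        (Y s (Z u - Z s) + M s (XX s u)) -
        (Y u (Z t - Z u) + M u (XX u t))‖
        ≤ C * (MY' * CZ' * CX^2 + CY * CRZ + CRY * MZ' * CX + CM * CXX) *
            |t - s| ^ (3*α)) ∧
    -- consequently the integral exists as a limit of compensated Riemann sums
    (∃ I : ℝ → U', I 0 = 0 ∧ ∀ t ∈ Icc (0:ℝ) T,
      IsPartitionLimit 0 t
        (fun u v => Y u (Z v - Z u) + M u (XX u v)) (I t)) := by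
  have hα0 : 0 < α := by linarith
  have hTa : (0:ℝ) < |T - 0| ^ α := by
    rw [sub_zero, abs_of_nonneg hT.le]
    exact Real.rpow_pos_of_pos hT α
  have hTa2 : (0:ℝ) < |T - 0| ^ (2*α) := by
    rw [sub_zero, abs_of_nonneg hT.le]
    exact Real.rpow_pos_of_pos hT (2*α)
  have hCX0 : 0 ≤ CX := by
    have h1 := (norm_nonneg (X T - X 0)).trans (hX 0 T le_rfl hT.le le_rfl)
    nlinarith
  have hCY0 : 0 ≤ CY := by
    have h1 := (norm_nonneg (Y T - Y 0)).trans (hY 0 T le_rfl hT.le le_rfl)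
    nlinarith
  have hCZ'0 : 0 ≤ CZ' := by
    have h1 := (norm_nonneg (Z' T - Z' 0)).trans (hZ' 0 T le_rfl hT.le le_rfl)
    nlinarith
  have hCM0 : 0 ≤ CM := by
    have h1 := (norm_nonneg (M T - M 0)).trans (hMholder 0 T le_rfl hT.le le_rfl)
    nlinarith
  have hCXX0 : 0 ≤ CXX := by
    have h1 := (norm_nonneg (XX 0 T)).trans (hXX 0 T le_rfl hT.le le_rfl)
    nlinarith
  have hCRY0 : 0 ≤ CRY := by
    have h1 := (norm_nonneg _).trans (hRY 0 T le_rfl hT.le le_rfl)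
    nlinarith
  have hCRZ0 : 0 ≤ CRZ := by
    have h1 := (norm_nonneg _).trans (hRZ 0 T le_rfl hT.le le_rfl)
    nlinarith
  have hMY'0 : 0 ≤ MY' := (norm_nonneg (Y' 0)).trans (hY'bdd 0 le_rfl hT.le)
  have hMZ'0 : 0 ≤ MZ' := (norm_nonneg (Z' 0)).trans (hZ'bdd 0 le_rfl hT.le)
  have hK0 : 0 ≤ MY' * CZ' * CX^2 + CY * CRZ + CRY * MZ' * CX + CM * CXX := by
    have h1 : 0 ≤ MY' * CZ' * CX^2 := by positivity
    have h2 : 0 ≤ CY * CRZ := mul_nonneg hCY0 hCRZ0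
    have h3 : 0 ≤ CRY * MZ' * CX := mul_nonneg (mul_nonneg hCRY0 hMZ'0) hCX0
    have h4 : 0 ≤ CM * CXX := mul_nonneg hCM0 hCXX0
    linarith
  have key : ∀ s u t : ℝ, 0 ≤ s → s ≤ u → u ≤ t → t ≤ T →
      ‖(Y s (Z t - Z s) + M s (XX s t)) -
        (Y s (Z u - Z s) + M s (XX s u)) -
        (Y u (Z t - Z u) + M u (XX u t))‖
        ≤ (MY' * CZ' * CX^2 + CY * CRZ + CRY * MZ' * CX + CM * CXX) * (t - s) ^ (3*α) := by
    intro s u t h0s hsu hut htT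
    have h0u : 0 ≤ u := le_trans h0s hsu
    have h0t : 0 ≤ t := le_trans h0u hut
    have huT : u ≤ T := le_trans hut htT
    have hsT : s ≤ T := le_trans hsu huT
    have hchen := chen s u t h0s hsu hut htT
    set a := X u - X s with ha
    set b := X t - X u with hb
    have hMt : M s (tensor a b)
        = Y' s a (Z' s b) := hM s _ _
    have keyeq : (Y s (Z t - Z s) + M s (XX s t)) -
        (Y s (Z u - Z s) + M s (XX s u)) -
        (Y u (Z t - Z u) + M u (XX u t))
        = -((Y u - Y s) (Z t - Z u - Z' u b))
          - ((Y u - Y s - Y' s a) (Z' u b))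
          - ((Y' s a) ((Z' u - Z' s) b))
          - ((M u - M s) (XX u t)) := by
      simp only [hchen, map_add, map_sub, ContinuousLinearMap.sub_apply, hMt]
      abel
    rw [keyeq]
    have e_us : |u - s| = u - s := abs_of_nonneg (by linarith)
    have e_ut : |t - u| = t - u := abs_of_nonneg (by linarith)
    have hprod : ∀ (β₁ β₂ x y : ℝ), 0 ≤ β₁ → 0 ≤ β₂ → β₁ + β₂ = 3*α →
        0 ≤ x → x ≤ t - s → 0 ≤ y → y ≤ t - s → x^β₁ * y^β₂ ≤ (t-s)^(3*α) := by
      intro β₁ β₂ x y hb1 hb2 hsum hx hxle hy hyle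
      have hts : (0:ℝ) ≤ t - s := by linarith
      calc x^β₁ * y^β₂ ≤ (t-s)^β₁ * (t-s)^β₂ :=
            mul_le_mul (Real.rpow_le_rpow hx hxle hb1) (Real.rpow_le_rpow hy hyle hb2)
              (Real.rpow_nonneg hy β₂) (Real.rpow_nonneg hts β₁)
        _ = (t-s)^(3*α) := by rw [← Real.rpow_add_of_nonneg hts hb1 hb2, hsum]
    have hb1 : ‖(Y u - Y s) (Z t - Z u - Z' u b)‖
        ≤ CY * CRZ * (t-s)^(3*α) := by
      calc ‖(Y u - Y s) (Z t - Z u - Z' u b)‖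
          ≤ ‖Y u - Y s‖ * ‖Z t - Z u - Z' u b‖ :=
            ContinuousLinearMap.le_opNorm _ _
        _ ≤ (CY * |u - s|^α) * (CRZ * |t - u|^(2*α)) :=
            mul_le_mul (hY s u h0s hsu huT) (hRZ u t h0u hut htT) (norm_nonneg _)
              (mul_nonneg hCY0 (Real.rpow_nonneg (abs_nonneg _) _))
        _ = CY * CRZ * (|u-s|^α * |t-u|^(2*α)) := by ring
        _ ≤ CY * CRZ * (t-s)^(3*α) := by
            refine mul_le_mul_of_nonneg_left ?_ (mul_nonneg hCY0 hCRZ0)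
            rw [e_us, e_ut]
            exact hprod α (2*α) _ _ (le_of_lt hα0) (by linarith) (by ring)
              (by linarith) (by linarith) (by linarith) (by linarith)
    have hb2 : ‖(Y u - Y s - Y' s a) (Z' u b)‖
        ≤ CRY * MZ' * CX * (t-s)^(3*α) := by
      have hZub : ‖Z' u b‖ ≤ MZ' * (CX * |t - u|^α) := by
        calc ‖Z' u b‖ ≤ ‖Z' u‖ * ‖X t - X u‖ := ContinuousLinearMap.le_opNorm _ _
          _ ≤ MZ' * (CX * |t - u|^α) :=
            mul_le_mul (hZ'bdd u h0u huT) (hX u t h0u hut htT) (norm_nonneg _) hMZ'0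
      calc ‖(Y u - Y s - Y' s a) (Z' u b)‖
          ≤ ‖Y u - Y s - Y' s a‖ * ‖Z' u b‖ :=
            ContinuousLinearMap.le_opNorm _ _
        _ ≤ (CRY * |u - s|^(2*α)) * (MZ' * (CX * |t - u|^α)) :=
            mul_le_mul (hRY s u h0s hsu huT) hZub (norm_nonneg _)
              (mul_nonneg hCRY0 (Real.rpow_nonneg (abs_nonneg _) _))
        _ = CRY * MZ' * CX * (|u-s|^(2*α) * |t-u|^α) := by ring
        _ ≤ CRY * MZ' * CX * (t-s)^(3*α) := by
            refine mul_le_mul_of_nonneg_left ?_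
              (mul_nonneg (mul_nonneg hCRY0 hMZ'0) hCX0)
            rw [e_us, e_ut]
            exact hprod (2*α) α _ _ (by linarith) (le_of_lt hα0) (by ring)
              (by linarith) (by linarith) (by linarith) (by linarith)
    have hb3 : ‖(Y' s a) ((Z' u - Z' s) b)‖
        ≤ MY' * CZ' * CX^2 * (t-s)^(3*α) := by
      have hYa : ‖Y' s a‖ ≤ MY' * (CX * |u - s|^α) := by
        calc ‖Y' s a‖ ≤ ‖Y' s‖ * ‖X u - X s‖ := ContinuousLinearMap.le_opNorm _ _
          _ ≤ MY' * (CX * |u - s|^α) :=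
            mul_le_mul (hY'bdd s h0s hsT) (hX s u h0s hsu huT) (norm_nonneg _) hMY'0
      have hZb : ‖(Z' u - Z' s) b‖ ≤ (CZ' * |u - s|^α) * (CX * |t - u|^α) := by
        calc ‖(Z' u - Z' s) b‖ ≤ ‖Z' u - Z' s‖ * ‖X t - X u‖ :=
              ContinuousLinearMap.le_opNorm _ _
          _ ≤ (CZ' * |u - s|^α) * (CX * |t - u|^α) :=
            mul_le_mul (hZ' s u h0s hsu huT) (hX u t h0u hut htT) (norm_nonneg _)
              (mul_nonneg hCZ'0 (Real.rpow_nonneg (abs_nonneg _) _))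
      have h2a : |u-s|^α * |u-s|^α = |u-s|^(2*α) := by
        rw [← Real.rpow_add_of_nonneg (abs_nonneg _) (le_of_lt hα0) (le_of_lt hα0)]
        ring_nf
      calc ‖(Y' s a) ((Z' u - Z' s) b)‖
          ≤ ‖Y' s a‖ * ‖(Z' u - Z' s) b‖ :=
            ContinuousLinearMap.le_opNorm _ _
        _ ≤ (MY' * (CX * |u - s|^α)) * ((CZ' * |u - s|^α) * (CX * |t - u|^α)) :=
            mul_le_mul hYa hZb (norm_nonneg _)
              (by positivity)
        _ = MY' * CZ' * CX^2 * ((|u-s|^α * |u-s|^α) * |t-u|^α) := by ring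
        _ = MY' * CZ' * CX^2 * (|u-s|^(2*α) * |t-u|^α) := by rw [h2a]
        _ ≤ MY' * CZ' * CX^2 * (t-s)^(3*α) := by
            refine mul_le_mul_of_nonneg_left ?_ (by positivity)
            rw [e_us, e_ut]
            exact hprod (2*α) α _ _ (by linarith) (le_of_lt hα0) (by ring)
              (by linarith) (by linarith) (by linarith) (by linarith)
    have hb4 : ‖(M u - M s) (XX u t)‖ ≤ CM * CXX * (t-s)^(3*α) := by
      calc ‖(M u - M s) (XX u t)‖ ≤ ‖M u - M s‖ * ‖XX u t‖ :=
            ContinuousLinearMap.le_opNorm _ _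
        _ ≤ (CM * |u - s|^α) * (CXX * |t - u|^(2*α)) :=
            mul_le_mul (hMholder s u h0s hsu huT) (hXX u t h0u hut htT) (norm_nonneg _)
              (mul_nonneg hCM0 (Real.rpow_nonneg (abs_nonneg _) _))
        _ = CM * CXX * (|u-s|^α * |t-u|^(2*α)) := by ring
        _ ≤ CM * CXX * (t-s)^(3*α) := by
            refine mul_le_mul_of_nonneg_left ?_ (mul_nonneg hCM0 hCXX0)
            rw [e_us, e_ut]
            exact hprod α (2*α) _ _ (le_of_lt hα0) (by linarith) (by ring)
              (by linarith) (by linarith) (by linarith) (by linarith)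
    have tri : ‖-((Y u - Y s) (Z t - Z u - Z' u b))
          - ((Y u - Y s - Y' s a) (Z' u b))
          - ((Y' s a) ((Z' u - Z' s) b))
          - ((M u - M s) (XX u t))‖
        ≤ ‖(Y u - Y s) (Z t - Z u - Z' u b)‖
          + ‖(Y u - Y s - Y' s a) (Z' u b)‖
          + ‖(Y' s a) ((Z' u - Z' s) b)‖
          + ‖(M u - M s) (XX u t)‖ := by
      refine le_trans (norm_sub_le _ _) (add_le_add_left ?_ _)
      refine le_trans (norm_sub_le _ _) (add_le_add_left ?_ _)
      refine le_trans (norm_sub_le _ _) (add_le_add_left ?_ _)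
      rw [norm_neg]
    refine le_trans tri ?_
    have expand : (MY' * CZ' * CX^2 + CY * CRZ + CRY * MZ' * CX + CM * CXX) * (t - s)^(3*α)
        = CY * CRZ * (t-s)^(3*α) + CRY * MZ' * CX * (t-s)^(3*α)
          + MY' * CZ' * CX^2 * (t-s)^(3*α) + CM * CXX * (t-s)^(3*α) := by ring
    rw [expand]
    linarith
  constructor
  · refine ⟨1, fun s u t h0s hsu hut htT => ?_⟩
    rw [one_mul, abs_of_nonneg (by linarith : (0:ℝ) ≤ t - s)]
    exact key s u t h0s hsu hut htT
  · obtain ⟨I, hI0, hlim⟩ := RPAux.abstract_sewing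
      (fun s t => Y s (Z t - Z s) + M s (XX s t))
      (MY' * CZ' * CX^2 + CY * CRZ + CRY * MZ' * CX + CM * CXX) (3*α) T
      (by linarith) hK0 hT.le key
    exact ⟨I, hI0, hlim⟩
end

section
/- Let X : [0,T] → V be α-Hölder with α ∈ (1/3,1/2], let (Z, Z') be a controlled path with values in U, and let g : [0,T] × U → W be such that: for each x, (g(·,x), h(·,x)) is a controlled path (with Gubinelli derivative h(·,x) ∈ C^α([0,T]; L(V,W))) with remainder bounds uniform along the path Z; g(t,·) is twice continuously differentiable for each t; and h(t,·) is C¹ with the map (t,x) ↦ Dh(t,x) continuous. Then η_t := g(t, Z_t) is a controlled path with respect to X with Gubinelli derivative ∂_X η_t = h(t, Z_t) + Dg(t, Z_t) ∘ Z'_t, i.e., the remainder R^η_{st} := g(t,Z_t) − g(s,Z_s) − h(s,Z_s)X_{st} − Dg(s,Z_s)(Z'_s X_{st}) satisfies sup_{s<t}|R^η_{st}|/|t−s|^{2α} < ∞, provided additionally that the quantities sup_s ‖h(·,Z_s)‖_α, sup_s ‖Dg(·,Z_s)‖_α, sup_t ‖R^{g(·,Z_t)}‖_{2α}, and the sups of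 |Dh|, |Dg|, |D²g| over the relevant compact sets are finite. -/
open Set

private lemma lip_on {U W : Type*}
    [NormedAddCommGroup U] [NormedSpace ℝ U]
    [NormedAddCommGroup W] [NormedSpace ℝ W]
    {f : U → W} {s : Set U} (hs : Convex ℝ s) {M : ℝ}
    (hdiff : Differentiable ℝ f)
    (hb : ∀ z ∈ s, ‖fderiv ℝ f z‖ ≤ M) {x y : U} (hx : x ∈ s) (hy : y ∈ s) :
    ‖f y - f x‖ ≤ M * ‖y - x‖ :=
  hs.norm_image_sub_le_of_norm_fderiv_le (fun z _ => hdiff z) hb hx hy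

private lemma seg_norm_le {U : Type*} [NormedAddCommGroup U] [NormedSpace ℝ U]
    {x y z : U} (hz : z ∈ segment ℝ x y) : ‖z - x‖ ≤ ‖y - x‖ := by
  rw [segment_eq_image'] at hz
  obtain ⟨θ, hθ, rfl⟩ := hz
  simp only [add_sub_cancel_left, norm_smul, Real.norm_eq_abs]
  calc |θ| * ‖y - x‖ ≤ 1 * ‖y - x‖ := by
        apply mul_le_mul_of_nonneg_right _ (norm_nonneg _)
        rw [abs_le]; constructor <;> linarith [hθ.1, hθ.2]
    _ = ‖y - x‖ := one_mul _

private lemma taylor_on {U W : Type*}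
    [NormedAddCommGroup U] [NormedSpace ℝ U]
    [NormedAddCommGroup W] [NormedSpace ℝ W]
    {f : U → W} (hf : ContDiff ℝ 2 f) {s : Set U} (hs : Convex ℝ s) {M : ℝ}
    (hb : ∀ z ∈ s, ‖fderiv ℝ (fderiv ℝ f) z‖ ≤ M) {x y : U}
    (hx : x ∈ s) (hy : y ∈ s) :
    ‖f y - f x - fderiv ℝ f x (y - x)‖ ≤ M * ‖y - x‖ * ‖y - x‖ := by
  have hM0 : 0 ≤ M := le_trans (norm_nonneg (fderiv ℝ (fderiv ℝ f) x)) (hb x hx)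
  have hf1 : Differentiable ℝ f := hf.differentiable (by norm_num)
  have hDf : Differentiable ℝ (fderiv ℝ f) :=
    (hf.fderiv_right (m := 1) (by norm_num)).differentiable (by norm_num)
  set L := fderiv ℝ f x with hL
  have hseg : segment ℝ x y ⊆ s := hs.segment_subset hx hy
  have key : ‖(f y - L y) - (f x - L x)‖ ≤ (M * ‖y - x‖) * ‖y - x‖ := by
    apply (convex_segment x y).norm_image_sub_le_of_norm_fderiv_le
      (f := fun z => f z - L z)
      (fun z _ => (hf1 z).sub L.differentiableAt)
      (fun z hz => ?_) (left_mem_segment ℝ x y) (right_mem_segment ℝ x y)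
    have heq : fderiv ℝ (fun z => f z - L z) z = fderiv ℝ f z - L := by
      rw [fderiv_fun_sub (hf1 z) L.differentiableAt, L.fderiv]
    rw [heq]
    calc ‖fderiv ℝ f z - L‖ ≤ M * ‖z - x‖ :=
          lip_on hs hDf hb hx (hseg hz)
      _ ≤ M * ‖y - x‖ := mul_le_mul_of_nonneg_left (seg_norm_le hz) hM0
  have heq2 : (f y - L y) - (f x - L x) = f y - f x - L (y - x) := by
    rw [map_sub]; abel
  rw [heq2] at key
  linarith [key]


/-- chain rule for controlled paths, Lemma 3.1: Let `(Z, Z')` be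
a controlled path with values in `U` and `g : [0,T] × U → W` a space-time
function such that for each `x` the pair `(g(·,x), h(·,x))` is a controlled
path, with remainder bounds uniform along the path `Z`; `g(t,·)` is C²; `h(t,·)`
is C¹ with `(t,x) ↦ Dh(t,x)` continuous; and the various sups below are finite.
Then `η_t = g(t, Z_t)` is a controlled path with Gubinelli derivative
`∂_X η_t = h(t, Z_t) + Dg(t, Z_t) ∘ Z'_t`. -/
theorem chain_rule_controlled {U V W : Type*}
    [NormedAddCommGroup U] [NormedSpace ℝ U]
    [NormedAddCommGroup V] [NormedSpace ℝ V]
    [NormedAddCommGroup W] [NormedSpace ℝ W]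
    (α T : ℝ) (hα1 : 1/3 < α) (hα2 : α ≤ 1/2) (hT : 0 < T)
    (X : ℝ → V) (CX : ℝ)
    (hX : ∀ s t : ℝ, 0 ≤ s → s ≤ t → t ≤ T → ‖X t - X s‖ ≤ CX * |t - s| ^ α)
    -- the controlled path (Z, Z')
    (Z : ℝ → U) (Z' : ℝ → V →L[ℝ] U) (CZ CZ' CRZ : ℝ)
    (hZ : ∀ s t : ℝ, 0 ≤ s → s ≤ t → t ≤ T → ‖Z t - Z s‖ ≤ CZ * |t - s| ^ α)
    (hZ' : ∀ s t : ℝ, 0 ≤ s → s ≤ t → t ≤ T → ‖Z' t - Z' s‖ ≤ CZ' * |t - s| ^ α)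
    (hRZ : ∀ s t : ℝ, 0 ≤ s → s ≤ t → t ≤ T →
      ‖Z t - Z s - Z' s (X t - X s)‖ ≤ CRZ * |t - s| ^ (2*α))
    -- the space-time function g with Gubinelli derivative h in time
    (g : ℝ → U → W) (h : ℝ → U → V →L[ℝ] W)
    -- spatial regularity: g(t,·) is C², h(t,·) is C¹, Dh jointly continuous
    (hg_C2 : ∀ t : ℝ, ContDiff ℝ 2 (g t))
    (hh_C1 : ∀ t : ℝ, ContDiff ℝ 1 (h t))
    (hDh_cont : Continuous (fun p : ℝ × U => fderiv ℝ (h p.1) p.2))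
    (hg_cont : Continuous (fun p : ℝ × U => g p.1 p.2))
    (hh_cont : Continuous (fun p : ℝ × U => h p.1 p.2))
    -- (g(·,x), h(·,x)) is a controlled path, remainder uniform along Z:
    -- sup_t ‖R^{g(·,Z_t)}‖_{2α} < ∞
    (Cg : ℝ)
    (hRg : ∀ u : ℝ, 0 ≤ u → u ≤ T → ∀ s t : ℝ, 0 ≤ s → s ≤ t → t ≤ T →
      ‖g t (Z u) - g s (Z u) - (h s (Z u)) (X t - X s)‖ ≤ Cg * |t - s| ^ (2*α))
    -- sup_s ‖h(·,Z_s)‖_α < ∞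
    (Ch : ℝ)
    (hhα : ∀ u : ℝ, 0 ≤ u → u ≤ T → ∀ s t : ℝ, 0 ≤ s → s ≤ t → t ≤ T →
      ‖h t (Z u) - h s (Z u)‖ ≤ Ch * |t - s| ^ α)
    -- sup_s ‖Dg(·,Z_s)‖_α < ∞
    (CDg : ℝ)
    (hDgα : ∀ u : ℝ, 0 ≤ u → u ≤ T → ∀ s t : ℝ, 0 ≤ s → s ≤ t → t ≤ T →
      ‖fderiv ℝ (g t) (Z u) - fderiv ℝ (g s) (Z u)‖ ≤ CDg * |t - s| ^ α)
    -- sups of |Dh|, |Dg|, |D²g| over the relevant compact (convex) sets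
    (M : ℝ)
    (hM : ∀ t : ℝ, 0 ≤ t → t ≤ T → ∀ x ∈ convexHull ℝ (Z '' Icc 0 T),
      ‖fderiv ℝ (h t) x‖ ≤ M ∧ ‖fderiv ℝ (g t) x‖ ≤ M ∧
      ‖fderiv ℝ (fderiv ℝ (g t)) x‖ ≤ M) :
    -- η_t = g(t, Z_t) is a controlled path with Gubinelli derivative
    -- ∂_X η_t = h(t,Z_t) + Dg(t,Z_t) ∘ Z'_t :
    -- the Gubinelli derivative is α-Hölder …
    (∃ C' : ℝ, ∀ s t : ℝ, 0 ≤ s → s ≤ t → t ≤ T →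
      ‖(h t (Z t) + (fderiv ℝ (g t) (Z t)).comp (Z' t)) -
        (h s (Z s) + (fderiv ℝ (g s) (Z s)).comp (Z' s))‖ ≤ C' * |t - s| ^ α) ∧
    -- … and the remainder R^η is 2α-Hölder
    (∃ C : ℝ, ∀ s t : ℝ, 0 ≤ s → s ≤ t → t ≤ T →
      ‖g t (Z t) - g s (Z s) - (h s (Z s)) (X t - X s) -
        (fderiv ℝ (g s) (Z s)) (Z' s (X t - X s))‖ ≤ C * |t - s| ^ (2*α)) := by

  have hα0 : 0 < α := by linarith
  set S := convexHull ℝ (Z '' Icc 0 T) with hS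
  have hSc : Convex ℝ S := convex_convexHull ℝ _
  have hmem : ∀ u : ℝ, 0 ≤ u → u ≤ T → Z u ∈ S := fun u h0 h1 =>
    subset_convexHull ℝ _ (mem_image_of_mem Z ⟨h0, h1⟩)
  have hM0 : 0 ≤ M :=
    le_trans (norm_nonneg (fderiv ℝ (h 0) (Z 0))) (hM 0 le_rfl hT.le _ (hmem 0 le_rfl hT.le)).1
  have hTα : 0 < T ^ α := Real.rpow_pos_of_pos hT α
  have hCZ' : 0 ≤ CZ' := by
    have h1 := (norm_nonneg _).trans (hZ' 0 T le_rfl hT.le le_rfl)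
    rw [sub_zero, abs_of_nonneg hT.le] at h1
    nlinarith
  set K := ‖Z' 0‖ + CZ' * T ^ α with hK
  have hZ'bd : ∀ u : ℝ, 0 ≤ u → u ≤ T → ‖Z' u‖ ≤ K := by
    intro u h0 h1
    have h2 := hZ' 0 u le_rfl h0 h1
    rw [sub_zero, abs_of_nonneg h0] at h2
    have h3 : u ^ α ≤ T ^ α := Real.rpow_le_rpow h0 h1 hα0.le
    have h4 : ‖Z' u‖ ≤ ‖Z' u - Z' 0‖ + ‖Z' 0‖ := by
      calc ‖Z' u‖ = ‖(Z' u - Z' 0) + Z' 0‖ := by rw [sub_add_cancel]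
        _ ≤ ‖Z' u - Z' 0‖ + ‖Z' 0‖ := norm_add_le _ _
    nlinarith [mul_le_mul_of_nonneg_left h3 hCZ']
  constructor
  · refine ⟨M*CZ + Ch + (M*CZ + CDg)*K + M*CZ', fun s t hs0 hst htT => ?_⟩
    have ht0 : 0 ≤ t := hs0.trans hst
    have hsT : s ≤ T := hst.trans htT
    have hZs : Z s ∈ S := hmem s hs0 hsT
    have hZt : Z t ∈ S := hmem t ht0 htT
    set dα := |t - s| ^ α with hdα
    have hdα0 : 0 ≤ dα := Real.rpow_nonneg (abs_nonneg _) α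
    have hZts : ‖Z t - Z s‖ ≤ CZ * dα := hZ s t hs0 hst htT
    have hCZdα : 0 ≤ CZ * dα := (norm_nonneg _).trans hZts
    have hKt : ‖Z' t‖ ≤ K := hZ'bd t ht0 htT
    have hK0 : 0 ≤ K := (norm_nonneg _).trans hKt
    have hA1 : ‖h t (Z t) - h t (Z s)‖ ≤ M * (CZ * dα) := by
      have h1 := lip_on hSc ((hh_C1 t).differentiable (by norm_num))
        (fun z hz => (hM t ht0 htT z hz).1) hZs hZt
      nlinarith [norm_nonneg (Z t - Z s)]
    have hA2 : ‖h t (Z s) - h s (Z s)‖ ≤ Ch * dα := hhα s hs0 hsT s t hs0 hst htT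
    have hDgdiff : Differentiable ℝ (fderiv ℝ (g t)) :=
      ((hg_C2 t).fderiv_right (m := 1) (by norm_num)).differentiable (by norm_num)
    have hA3' : ‖fderiv ℝ (g t) (Z t) - fderiv ℝ (g t) (Z s)‖ ≤ M * (CZ * dα) := by
      have h1 := lip_on hSc hDgdiff (fun z hz => (hM t ht0 htT z hz).2.2) hZs hZt
      nlinarith [norm_nonneg (Z t - Z s)]
    have hA3 : ‖(fderiv ℝ (g t) (Z t) - fderiv ℝ (g t) (Z s)).comp (Z' t)‖
        ≤ M * CZ * K * dα := by
      calc ‖(fderiv ℝ (g t) (Z t) - fderiv ℝ (g t) (Z s)).comp (Z' t)‖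
          ≤ ‖fderiv ℝ (g t) (Z t) - fderiv ℝ (g t) (Z s)‖ * ‖Z' t‖ :=
            ContinuousLinearMap.opNorm_comp_le _ _
        _ ≤ (M * (CZ * dα)) * K :=
            mul_le_mul hA3' hKt (norm_nonneg _) (mul_nonneg hM0 hCZdα)
        _ = M * CZ * K * dα := by ring
    have hA4 : ‖(fderiv ℝ (g t) (Z s) - fderiv ℝ (g s) (Z s)).comp (Z' t)‖
        ≤ CDg * K * dα := by
      have h1 : ‖fderiv ℝ (g t) (Z s) - fderiv ℝ (g s) (Z s)‖ ≤ CDg * dα :=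
        hDgα s hs0 hsT s t hs0 hst htT
      calc ‖(fderiv ℝ (g t) (Z s) - fderiv ℝ (g s) (Z s)).comp (Z' t)‖
          ≤ ‖fderiv ℝ (g t) (Z s) - fderiv ℝ (g s) (Z s)‖ * ‖Z' t‖ :=
            ContinuousLinearMap.opNorm_comp_le _ _
        _ ≤ (CDg * dα) * K :=
            mul_le_mul h1 hKt (norm_nonneg _) ((norm_nonneg _).trans h1)
        _ = CDg * K * dα := by ring
    have hA5 : ‖(fderiv ℝ (g s) (Z s)).comp (Z' t - Z' s)‖ ≤ M * (CZ' * dα) := by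
      calc ‖(fderiv ℝ (g s) (Z s)).comp (Z' t - Z' s)‖
          ≤ ‖fderiv ℝ (g s) (Z s)‖ * ‖Z' t - Z' s‖ :=
            ContinuousLinearMap.opNorm_comp_le _ _
        _ ≤ M * (CZ' * dα) := mul_le_mul (hM s hs0 hsT _ hZs).2.1
            (hZ' s t hs0 hst htT) (norm_nonneg _) hM0
    have hdecomp : (h t (Z t) + (fderiv ℝ (g t) (Z t)).comp (Z' t)) -
        (h s (Z s) + (fderiv ℝ (g s) (Z s)).comp (Z' s)) =
        ((h t (Z t) - h t (Z s)) + (h t (Z s) - h s (Z s)) +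
        (fderiv ℝ (g t) (Z t) - fderiv ℝ (g t) (Z s)).comp (Z' t) +
        (fderiv ℝ (g t) (Z s) - fderiv ℝ (g s) (Z s)).comp (Z' t) +
        (fderiv ℝ (g s) (Z s)).comp (Z' t - Z' s)) := by
      ext v
      simp only [ContinuousLinearMap.add_apply, ContinuousLinearMap.sub_apply,
        ContinuousLinearMap.coe_comp', Function.comp_apply, map_sub]
      abel
    rw [hdecomp]
    have n1 := norm_add_le ((h t (Z t) - h t (Z s)) + (h t (Z s) - h s (Z s)) +
        (fderiv ℝ (g t) (Z t) - fderiv ℝ (g t) (Z s)).comp (Z' t) +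
        (fderiv ℝ (g t) (Z s) - fderiv ℝ (g s) (Z s)).comp (Z' t))
        ((fderiv ℝ (g s) (Z s)).comp (Z' t - Z' s))
    have n2 := norm_add_le ((h t (Z t) - h t (Z s)) + (h t (Z s) - h s (Z s)) +
        (fderiv ℝ (g t) (Z t) - fderiv ℝ (g t) (Z s)).comp (Z' t))
        ((fderiv ℝ (g t) (Z s) - fderiv ℝ (g s) (Z s)).comp (Z' t))
    have n3 := norm_add_le ((h t (Z t) - h t (Z s)) + (h t (Z s) - h s (Z s)))
        ((fderiv ℝ (g t) (Z t) - fderiv ℝ (g t) (Z s)).comp (Z' t))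
    have n4 := norm_add_le (h t (Z t) - h t (Z s)) (h t (Z s) - h s (Z s))
    calc ‖(h t (Z t) - h t (Z s)) + (h t (Z s) - h s (Z s)) +
        (fderiv ℝ (g t) (Z t) - fderiv ℝ (g t) (Z s)).comp (Z' t) +
        (fderiv ℝ (g t) (Z s) - fderiv ℝ (g s) (Z s)).comp (Z' t) +
        (fderiv ℝ (g s) (Z s)).comp (Z' t - Z' s)‖
        ≤ M * (CZ * dα) + Ch * dα + M * CZ * K * dα + CDg * K * dα +
          M * (CZ' * dα) := by linarith
      _ = (M*CZ + Ch + (M*CZ + CDg)*K + M*CZ') * dα := by ring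
  · refine ⟨M*CZ*CZ + Cg + CDg*CZ + M*CRZ, fun s t hs0 hst htT => ?_⟩
    have ht0 : 0 ≤ t := hs0.trans hst
    have hsT : s ≤ T := hst.trans htT
    have hZs : Z s ∈ S := hmem s hs0 hsT
    have hZt : Z t ∈ S := hmem t ht0 htT
    have hpow : |t - s| ^ (2*α) = |t - s| ^ α * |t - s| ^ α := by
      rw [two_mul]; exact Real.rpow_add' (abs_nonneg _) (by positivity)
    set dα := |t - s| ^ α with hdα
    have hdα0 : 0 ≤ dα := Real.rpow_nonneg (abs_nonneg _) α
    have hZts : ‖Z t - Z s‖ ≤ CZ * dα := hZ s t hs0 hst htT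
    have hB1 : ‖g t (Z t) - g t (Z s) - fderiv ℝ (g t) (Z s) (Z t - Z s)‖
        ≤ M * CZ * CZ * (dα * dα) := by
      have h1 := taylor_on (hg_C2 t) hSc
        (fun z hz => (hM t ht0 htT z hz).2.2) hZs hZt
      nlinarith [norm_nonneg (Z t - Z s),
        mul_le_mul hZts hZts (norm_nonneg _) ((norm_nonneg _).trans hZts)]
    have hB2 : ‖g t (Z s) - g s (Z s) - (h s (Z s)) (X t - X s)‖
        ≤ Cg * |t - s| ^ (2*α) := hRg s hs0 hsT s t hs0 hst htT
    have hB3 : ‖(fderiv ℝ (g t) (Z s) - fderiv ℝ (g s) (Z s)) (Z t - Z s)‖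
        ≤ CDg * CZ * (dα * dα) := by
      have h1 : ‖fderiv ℝ (g t) (Z s) - fderiv ℝ (g s) (Z s)‖ ≤ CDg * dα :=
        hDgα s hs0 hsT s t hs0 hst htT
      calc ‖(fderiv ℝ (g t) (Z s) - fderiv ℝ (g s) (Z s)) (Z t - Z s)‖
          ≤ ‖fderiv ℝ (g t) (Z s) - fderiv ℝ (g s) (Z s)‖ * ‖Z t - Z s‖ :=
            ContinuousLinearMap.le_opNorm _ _
        _ ≤ (CDg * dα) * (CZ * dα) :=
            mul_le_mul h1 hZts (norm_nonneg _) ((norm_nonneg _).trans h1)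
        _ = CDg * CZ * (dα * dα) := by ring
    have hB4 : ‖(fderiv ℝ (g s) (Z s)) (Z t - Z s - Z' s (X t - X s))‖
        ≤ M * (CRZ * |t - s| ^ (2*α)) := by
      calc ‖(fderiv ℝ (g s) (Z s)) (Z t - Z s - Z' s (X t - X s))‖
          ≤ ‖fderiv ℝ (g s) (Z s)‖ * ‖Z t - Z s - Z' s (X t - X s)‖ :=
            ContinuousLinearMap.le_opNorm _ _
        _ ≤ M * (CRZ * |t - s| ^ (2*α)) := mul_le_mul (hM s hs0 hsT _ hZs).2.1
            (hRZ s t hs0 hst htT) (norm_nonneg _) hM0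
    have hdecomp : g t (Z t) - g s (Z s) - (h s (Z s)) (X t - X s) -
        (fderiv ℝ (g s) (Z s)) (Z' s (X t - X s)) =
        (g t (Z t) - g t (Z s) - fderiv ℝ (g t) (Z s) (Z t - Z s)) +
        (g t (Z s) - g s (Z s) - (h s (Z s)) (X t - X s)) +
        ((fderiv ℝ (g t) (Z s) - fderiv ℝ (g s) (Z s)) (Z t - Z s)) +
        (fderiv ℝ (g s) (Z s)) (Z t - Z s - Z' s (X t - X s)) := by
      simp only [ContinuousLinearMap.sub_apply, map_sub]
      abel
    rw [hdecomp]
    have n1 := norm_add_le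
      ((g t (Z t) - g t (Z s) - fderiv ℝ (g t) (Z s) (Z t - Z s)) +
        (g t (Z s) - g s (Z s) - (h s (Z s)) (X t - X s)) +
        ((fderiv ℝ (g t) (Z s) - fderiv ℝ (g s) (Z s)) (Z t - Z s)))
      ((fderiv ℝ (g s) (Z s)) (Z t - Z s - Z' s (X t - X s)))
    have n2 := norm_add_le
      ((g t (Z t) - g t (Z s) - fderiv ℝ (g t) (Z s) (Z t - Z s)) +
        (g t (Z s) - g s (Z s) - (h s (Z s)) (X t - X s)))
      ((fderiv ℝ (g t) (Z s) - fderiv ℝ (g s) (Z s)) (Z t - Z s))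
    have n3 := norm_add_le
      (g t (Z t) - g t (Z s) - fderiv ℝ (g t) (Z s) (Z t - Z s))
      (g t (Z s) - g s (Z s) - (h s (Z s)) (X t - X s))
    calc ‖(g t (Z t) - g t (Z s) - fderiv ℝ (g t) (Z s) (Z t - Z s)) +
        (g t (Z s) - g s (Z s) - (h s (Z s)) (X t - X s)) +
        ((fderiv ℝ (g t) (Z s) - fderiv ℝ (g s) (Z s)) (Z t - Z s)) +
        (fderiv ℝ (g s) (Z s)) (Z t - Z s - Z' s (X t - X s))‖
        ≤ M * CZ * CZ * (dα * dα) + Cg * |t - s| ^ (2*α) +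
          CDg * CZ * (dα * dα) + M * (CRZ * |t - s| ^ (2*α)) := by linarith
      _ = (M*CZ*CZ + Cg + CDg*CZ + M*CRZ) * |t - s| ^ (2*α) := by
          rw [hdα, ← hpow]; ring
end

section
/- Let (X, 𝕏) be an α-Hölder rough path on ℝⁿ with α ∈ (1/3,1/2], let (Z, Z') be a controlled path with values in U given by Z_t = Z_0 + ∫_0^t a_r dX_r + ∫_0^t b_r d[X]_r, where (a, a') is a controlled path with values in L(ℝⁿ, U) and b ∈ C^α([0,T]; L(ℝⁿ⊗ℝⁿ, U)). Then Z' = a, and for any controlled path (c, c') with values in L(U, W), the substitution rule holds: ∫_0^t c_r d_X Z_r = ∫_0^t c_r a_r dX_r + ∫_0^t c_r b_r d[X]_r, where d_X Z denotes the integral of a controlled path against the controlled path Z (compensated Riemann sums Σ c_u Z_{uv} + (c'_u · Z'_u)𝕏_{uv}), the middle integral is a rough integral, and the last is a Young integral. -/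
open Set Filter

namespace SubstAux

lemma tendsto_div_succ (C : ℝ) :
    Tendsto (fun n : ℕ => C / ((n : ℝ) + 1)) atTop (nhds 0) := by
  apply Filter.Tendsto.div_atTop tendsto_const_nhds
  exact Filter.tendsto_atTop_add_const_right _ 1 tendsto_natCast_atTop_atTop

lemma partial_sum_bound (γ : ℝ) (hγ : 1 < γ) :
    ∃ K : ℝ, 0 ≤ K ∧ ∀ N : ℕ, ∑ j ∈ Finset.range N, (((j : ℝ) + 1)⁻¹) ^ γ ≤ K := by
  have h1 : Summable (fun n : ℕ => 1 / (n : ℝ) ^ γ) := Real.summable_one_div_nat_rpow.mpr hγ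
  have h2 : Summable (fun j : ℕ => (((j : ℝ) + 1)⁻¹) ^ γ) := by
    have h3 := (summable_nat_add_iff (f := fun n : ℕ => 1 / (n : ℝ) ^ γ) 1).mpr h1
    refine h3.congr fun j => ?_
    rw [one_div, ← Real.inv_rpow (by positivity)]
    push_cast
    ring_nf
  refine ⟨∑' j : ℕ, (((j : ℝ) + 1)⁻¹) ^ γ, tsum_nonneg fun j => by positivity, fun N => ?_⟩
  exact Summable.sum_le_tsum _ (fun i _ => by positivity) h2

lemma holder_bound {F : Type*} [NormedAddCommGroup F] (T α : ℝ) (hT : 0 ≤ T) (hα : 0 ≤ α)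
    (f : ℝ → F) (Cf : ℝ)
    (h : ∀ s t : ℝ, 0 ≤ s → s ≤ t → t ≤ T → ‖f t - f s‖ ≤ Cf * |t - s| ^ α) :
    ∀ u, 0 ≤ u → u ≤ T → ‖f u‖ ≤ ‖f 0‖ + |Cf| * T ^ α := by
  intro u hu huT
  have h1 : ‖f u - f 0‖ ≤ Cf * |u - 0| ^ α := h 0 u le_rfl hu huT
  have h2 : |u - 0| = u := by rw [sub_zero, abs_of_nonneg hu]
  rw [h2] at h1
  have h3 : Cf * u ^ α ≤ |Cf| * T ^ α := by
    apply mul_le_mul (le_abs_self _) (Real.rpow_le_rpow hu huT hα) (Real.rpow_nonneg hu _)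
      (abs_nonneg _)
  calc ‖f u‖ = ‖f 0 + (f u - f 0)‖ := by rw [add_sub_cancel]
    _ ≤ ‖f 0‖ + ‖f u - f 0‖ := norm_add_le _ _
    _ ≤ ‖f 0‖ + |Cf| * T ^ α := by linarith



lemma sewing_bound {E : Type*} [NormedAddCommGroup E]
    (Ξ : ℝ → ℝ → E) (s t γ Cδ : ℝ)
    (hγ : 1 < γ) (hCδ : 0 ≤ Cδ) (hst : s ≤ t)
    (hcoh : ∀ u v w : ℝ, s ≤ u → u ≤ v → v ≤ w → w ≤ t →
      ‖Ξ u w - Ξ u v - Ξ v w‖ ≤ Cδ * (w - u) ^ γ) :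
    ∀ k : ℕ, ∀ p : ℕ → ℝ, p 0 = s → p k = t → (∀ i, i < k → p i ≤ p (i + 1)) →
      ‖(∑ i ∈ Finset.range k, Ξ (p i) (p (i + 1))) - Ξ s t‖
        ≤ Cδ * 2 ^ γ * (t - s) ^ γ * ∑ j ∈ Finset.range (k - 1), (((j : ℝ) + 1)⁻¹) ^ γ := by
  have hγ0 : (0:ℝ) < γ := by linarith
  intro k
  induction k using Nat.strong_induction_on with
  | _ k IH =>
    intro p h0 hk hmono
    have hmono' : ∀ j, j ≤ k → ∀ i, i ≤ j → p i ≤ p j := by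
      intro j
      induction j with
      | zero =>
        intro _ i hi
        have : i = 0 := Nat.le_zero.mp hi
        subst this; exact le_rfl
      | succ m ih =>
        intro hm i hi
        rcases Nat.eq_or_lt_of_le hi with rfl | hlt
        · exact le_rfl
        · exact (ih (by omega) i (by omega)).trans (hmono m (by omega))
    rcases Nat.lt_or_ge k 2 with hk2 | hk2
    · interval_cases k
      · have h1 := hcoh s s s le_rfl le_rfl le_rfl hst
        simp only [sub_self, Real.zero_rpow (ne_of_gt hγ0), mul_zero, sub_sub_cancel_left,
          norm_neg] at h1
        have hts : t = s := by rw [← h0, ← hk]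
        subst hts
        simpa using h1
      · simp [h0, hk]
    · -- main case, 2 ≤ k
      have hkR : (1:ℝ) ≤ (k:ℝ) - 1 := by
        have : (2:ℝ) ≤ (k:ℝ) := by exact_mod_cast hk2
        linarith
      have hex : ∃ i ∈ Finset.Ico 1 k, p (i + 1) - p (i - 1) ≤ 2 * (t - s) / ((k:ℝ) - 1) := by
        by_contra hcon
        push_neg at hcon
        have hlt : ∑ i ∈ Finset.Ico 1 k, (2 * (t - s) / ((k:ℝ) - 1))
            < ∑ i ∈ Finset.Ico 1 k, (p (i + 1) - p (i - 1)) :=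
          Finset.sum_lt_sum_of_nonempty (by rw [Finset.nonempty_Ico]; omega) hcon
        have hconst : ∑ _i ∈ Finset.Ico 1 k, (2 * (t - s) / ((k:ℝ) - 1)) = 2 * (t - s) := by
          rw [Finset.sum_const, Nat.card_Ico, nsmul_eq_mul]
          have hk1 : ((k - 1 : ℕ) : ℝ) = (k:ℝ) - 1 := by
            push_cast [Nat.cast_sub (by omega : 1 ≤ k)]; ring
          rw [hk1, mul_comm, div_mul_cancel₀ _ (by linarith : (k:ℝ) - 1 ≠ 0)]
        have e1 : ∑ i ∈ Finset.Ico 1 k, (p (i + 1) - p (i - 1))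
            = ∑ i ∈ Finset.Ico 1 k, ((p (i + 1) - p i) + (p i - p (i - 1))) := by
          apply Finset.sum_congr rfl; intro i _; ring
        have e2 : ∑ i ∈ Finset.Ico 1 k, (p (i + 1) - p i) = p k - p 1 := by
          rw [Finset.sum_Ico_eq_sum_range]
          have := Finset.sum_range_sub (fun j => p (j + 1)) (k - 1)
          calc ∑ j ∈ Finset.range (k - 1), (p (1 + j + 1) - p (1 + j))
              = ∑ j ∈ Finset.range (k - 1), (p (j + 1 + 1) - p (j + 1)) := by
                apply Finset.sum_congr rfl; intro j _
                congr 2 <;> omega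
            _ = p (k - 1 + 1) - p 1 := this
            _ = p k - p 1 := by rw [(by omega : k - 1 + 1 = k)]
        have e3 : ∑ i ∈ Finset.Ico 1 k, (p i - p (i - 1)) = p (k - 1) - p 0 := by
          rw [Finset.sum_Ico_eq_sum_range]
          have := Finset.sum_range_sub p (k - 1)
          calc ∑ j ∈ Finset.range (k - 1), (p (1 + j) - p (1 + j - 1))
              = ∑ j ∈ Finset.range (k - 1), (p (j + 1) - p j) := by
                apply Finset.sum_congr rfl; intro j _
                congr 2 <;> omega
            _ = p (k - 1) - p 0 := this
        have hp1 : s ≤ p 1 := h0 ▸ hmono' 1 (by omega) 0 (by omega)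
        have hpk1 : p (k - 1) ≤ t := hk ▸ hmono' k le_rfl (k - 1) (by omega)
        rw [e1, Finset.sum_add_distrib, e2, e3, h0] at hlt
        rw [hconst] at hlt
        linarith
      obtain ⟨i, hiIco, hilen⟩ := hex
      have hi1 : 1 ≤ i := (Finset.mem_Ico.mp hiIco).1
      have hik : i < k := (Finset.mem_Ico.mp hiIco).2
      set q : ℕ → ℝ := fun j => if j < i then p j else p (j + 1) with hqdef
      have hq0 : q 0 = s := by simp only [hqdef]; rw [if_pos (by omega)]; exact h0
      have hqk : q (k - 1) = t := by
        simp only [hqdef]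
        rw [if_neg (by omega)]
        rw [← hk]; congr 1; omega
      have hqmono : ∀ j, j < k - 1 → q j ≤ q (j + 1) := by
        intro j hj
        by_cases hji : j + 1 < i
        · simp only [hqdef]; rw [if_pos (by omega), if_pos hji]; exact hmono j (by omega)
        · by_cases hji2 : j < i
          · simp only [hqdef]; rw [if_pos hji2, if_neg hji]
            exact hmono' (j + 2) (by omega) j (by omega)
          · simp only [hqdef]; rw [if_neg hji2, if_neg (by omega)]
            exact hmono (j + 1) (by omega)
      have hIH := IH (k - 1) (by omega) q hq0 hqk (fun j hj => hqmono j hj)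
      set f : ℕ → E := fun j => Ξ (p j) (p (j + 1)) with hfdef
      set g : ℕ → E := fun j => Ξ (q j) (q (j + 1)) with hgdef
      have hs1 : ∑ j ∈ Finset.range k, f j
          = ∑ j ∈ Finset.range (i + 1), f j + ∑ j ∈ Finset.Ico (i + 1) k, f j := by
        rw [Finset.range_eq_Ico, ← Finset.sum_Ico_consecutive f (by omega : 0 ≤ i + 1)
          (by omega : i + 1 ≤ k), ← Finset.range_eq_Ico]
      have hs2 : ∑ j ∈ Finset.range (i + 1), f j
          = ∑ j ∈ Finset.range (i - 1), f j + f (i - 1) + f i := by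
        have e : i + 1 = (i - 1) + 1 + 1 := by omega
        rw [e, Finset.sum_range_succ, Finset.sum_range_succ]
        have e2 : i - 1 + 1 = i := by omega
        rw [e2]
      have hs3a : ∑ j ∈ Finset.range i, g j = ∑ j ∈ Finset.range (i - 1), g j + g (i - 1) := by
        conv_lhs => rw [(by omega : i = (i - 1) + 1), Finset.sum_range_succ]
      have hs3 : ∑ j ∈ Finset.range (k - 1), g j
          = ∑ j ∈ Finset.range (i - 1), g j + g (i - 1) + ∑ j ∈ Finset.Ico i (k - 1), g j := by
        rw [Finset.range_eq_Ico, ← Finset.sum_Ico_consecutive g (by omega : 0 ≤ i)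
          (by omega : i ≤ k - 1), ← Finset.range_eq_Ico, hs3a]
      have hgf1 : ∑ j ∈ Finset.range (i - 1), g j = ∑ j ∈ Finset.range (i - 1), f j := by
        apply Finset.sum_congr rfl
        intro j hj
        rw [Finset.mem_range] at hj
        simp only [hgdef, hfdef, hqdef]
        rw [if_pos (by omega), if_pos (by omega)]
      have hgi : g (i - 1) = Ξ (p (i - 1)) (p (i + 1)) := by
        simp only [hgdef, hqdef]
        have e2 : i - 1 + 1 = i := by omega
        rw [e2, if_pos (by omega), if_neg (by omega)]
      have hs4 : ∑ j ∈ Finset.Ico i (k - 1), g j = ∑ j ∈ Finset.Ico (i + 1) k, f j := by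
        rw [Finset.sum_Ico_eq_sum_range, Finset.sum_Ico_eq_sum_range]
        have e : k - 1 - i = k - (i + 1) := by omega
        rw [e]
        apply Finset.sum_congr rfl
        intro j _
        simp only [hgdef, hfdef, hqdef]
        rw [if_neg (by omega), if_neg (by omega)]
        have e1 : i + j + 1 = i + 1 + j := by omega
        rw [e1]
      have hsum : ∑ j ∈ Finset.range k, f j
          = (∑ j ∈ Finset.range (k - 1), g j) + (f (i - 1) + f i - Ξ (p (i - 1)) (p (i + 1))) := by
        rw [hs1, hs2, hs3, hgf1, hgi, hs4]; abel
      -- coherence bound at removal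
      have hcb : ‖f (i - 1) + f i - Ξ (p (i - 1)) (p (i + 1))‖
          ≤ Cδ * (2 * (t - s) / ((k:ℝ) - 1)) ^ γ := by
        have h1 : s ≤ p (i - 1) := h0 ▸ hmono' (i - 1) (by omega) 0 (by omega)
        have h2 : p (i - 1) ≤ p i := by
          have := hmono (i - 1) (by omega)
          rwa [(by omega : i - 1 + 1 = i)] at this
        have h3 : p i ≤ p (i + 1) := hmono i hik
        have h4 : p (i + 1) ≤ t := hk ▸ hmono' k le_rfl (i + 1) (by omega)
        have hc := hcoh (p (i - 1)) (p i) (p (i + 1)) h1 h2 h3 h4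
        have e : f (i - 1) + f i - Ξ (p (i - 1)) (p (i + 1))
            = -(Ξ (p (i - 1)) (p (i + 1)) - Ξ (p (i - 1)) (p i) - Ξ (p i) (p (i + 1))) := by
          simp only [hfdef]
          have e2 : i - 1 + 1 = i := by omega
          rw [e2]; abel
        rw [e, norm_neg]
        refine hc.trans (mul_le_mul_of_nonneg_left ?_ hCδ)
        exact Real.rpow_le_rpow (by linarith) hilen (le_of_lt hγ0)
      -- final arithmetic
      have hsplit : (2 * (t - s) / ((k:ℝ) - 1)) ^ γ
          = 2 ^ γ * (t - s) ^ γ * (((k:ℝ) - 1)⁻¹) ^ γ := by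
        rw [div_eq_mul_inv, Real.mul_rpow (by linarith) (inv_nonneg.mpr (by linarith)),
          Real.mul_rpow (by norm_num) (by linarith)]
      have hS : ∑ j ∈ Finset.range (k - 1), (((j:ℝ) + 1)⁻¹) ^ γ
          = (∑ j ∈ Finset.range (k - 2), (((j:ℝ) + 1)⁻¹) ^ γ) + (((k:ℝ) - 1)⁻¹) ^ γ := by
        conv_lhs => rw [(by omega : k - 1 = (k - 2) + 1), Finset.sum_range_succ]
        congr 3
        push_cast [Nat.cast_sub (by omega : 2 ≤ k)]
        ring
      calc ‖(∑ j ∈ Finset.range k, f j) - Ξ s t‖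
          = ‖((∑ j ∈ Finset.range (k - 1), g j) - Ξ s t)
              + (f (i - 1) + f i - Ξ (p (i - 1)) (p (i + 1)))‖ := by rw [hsum]; congr 1; abel
        _ ≤ ‖(∑ j ∈ Finset.range (k - 1), g j) - Ξ s t‖
              + ‖f (i - 1) + f i - Ξ (p (i - 1)) (p (i + 1))‖ := norm_add_le _ _
        _ ≤ Cδ * 2 ^ γ * (t - s) ^ γ * ∑ j ∈ Finset.range (k - 1 - 1), (((j:ℝ) + 1)⁻¹) ^ γ
              + Cδ * (2 * (t - s) / ((k:ℝ) - 1)) ^ γ := add_le_add hIH hcb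
        _ ≤ Cδ * 2 ^ γ * (t - s) ^ γ * ∑ j ∈ Finset.range (k - 1), (((j:ℝ) + 1)⁻¹) ^ γ := by
            rw [hsplit, hS, (by omega : k - 1 - 1 = k - 2), mul_add]
            apply le_of_eq
            ring


noncomputable def unif (s t : ℝ) (n i : ℕ) : ℝ := s + (t - s) * i / ((n : ℝ) + 1)

lemma unif_zero (s t : ℝ) (n : ℕ) : unif s t n 0 = s := by simp [unif]

lemma unif_last (s t : ℝ) (n : ℕ) : unif s t n (n + 1) = t := by
  unfold unif
  push_cast
  have h : (n:ℝ) + 1 ≠ 0 := by positivity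
  field_simp
  ring

lemma unif_step (s t : ℝ) (n i : ℕ) :
    unif s t n (i + 1) - unif s t n i = (t - s) / ((n : ℝ) + 1) := by
  unfold unif
  push_cast
  have h : (n:ℝ) + 1 ≠ 0 := by positivity
  field_simp
  ring

lemma unif_mono (s t : ℝ) (h : s ≤ t) (n i : ℕ) : unif s t n i ≤ unif s t n (i + 1) := by
  have := unif_step s t n i
  have h2 : (0:ℝ) ≤ (t - s) / ((n : ℝ) + 1) := div_nonneg (by linarith) (by positivity)
  linarith

lemma unif_mem (s t : ℝ) (h : s ≤ t) (n i : ℕ) (hi : i ≤ n + 1) :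
    s ≤ unif s t n i ∧ unif s t n i ≤ t := by
  unfold unif
  have h1 : (0:ℝ) ≤ (i:ℝ) := Nat.cast_nonneg i
  have h2 : (i:ℝ) ≤ (n:ℝ) + 1 := by exact_mod_cast hi
  have h3 : (0:ℝ) < (n:ℝ) + 1 := by positivity
  constructor
  · have : (0:ℝ) ≤ (t - s) * i / ((n:ℝ) + 1) := div_nonneg (mul_nonneg (by linarith) h1) (by positivity)
    linarith
  · have : (t - s) * i / ((n:ℝ) + 1) ≤ (t - s) := by
      rw [div_le_iff₀ h3]
      nlinarith
    linarith

lemma increment_est {E : Type*} [NormedAddCommGroup E]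
    (T γ Cδ K : ℝ) (Ξ : ℝ → ℝ → E) (I : ℝ → E)
    (hγ : 1 < γ) (hCδ : 0 ≤ Cδ)
    (hK : ∀ N : ℕ, ∑ j ∈ Finset.range N, (((j : ℝ) + 1)⁻¹) ^ γ ≤ K)
    (hI : ∀ t ∈ Set.Icc (0:ℝ) T, IsPartitionLimit 0 t Ξ (I t))
    (hcoh : ∀ u v w : ℝ, 0 ≤ u → u ≤ v → v ≤ w → w ≤ T →
      ‖Ξ u w - Ξ u v - Ξ v w‖ ≤ Cδ * (w - u) ^ γ)
    (s t : ℝ) (hs : 0 ≤ s) (hstt : s ≤ t) (htT : t ≤ T) :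
    ‖I t - I s - Ξ s t‖ ≤ Cδ * 2 ^ γ * K * (t - s) ^ γ := by
  have hsT : s ≤ T := hstt.trans htT
  have h0t : 0 ≤ t := hs.trans hstt
  set S2 : ℕ → E := fun nn =>
    ∑ i ∈ Finset.range (nn + 1), Ξ (unif s t nn i) (unif s t nn (i + 1)) with hS2def
  have hbound : ∀ nn, ‖S2 nn - Ξ s t‖ ≤ Cδ * 2 ^ γ * K * (t - s) ^ γ := by
    intro nn
    have hcoh' : ∀ u v w : ℝ, s ≤ u → u ≤ v → v ≤ w → w ≤ t →
        ‖Ξ u w - Ξ u v - Ξ v w‖ ≤ Cδ * (w - u) ^ γ :=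
      fun u v w h1 h2 h3 h4 => hcoh u v w (hs.trans h1) h2 h3 (h4.trans htT)
    have hsew := sewing_bound Ξ s t γ Cδ hγ hCδ hstt hcoh' (nn + 1) (fun i => unif s t nn i)
      (unif_zero s t nn) (unif_last s t nn) (fun i _ => unif_mono s t hstt nn i)
    refine hsew.trans ?_
    calc Cδ * 2 ^ γ * (t - s) ^ γ * ∑ j ∈ Finset.range (nn + 1 - 1), (((j:ℝ) + 1)⁻¹) ^ γ
        ≤ Cδ * 2 ^ γ * (t - s) ^ γ * K := by
          apply mul_le_mul_of_nonneg_left (hK _)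
          have := Real.rpow_nonneg (by linarith : (0:ℝ) ≤ t - s) γ
          positivity
      _ = Cδ * 2 ^ γ * K * (t - s) ^ γ := by ring
  -- concatenated partition of [0, t]
  set pp : ℕ → ℕ → ℝ := fun nn i =>
    if i ≤ nn + 1 then unif 0 s nn i else unif s t nn (i - (nn + 1)) with hppdef
  have hppA : ∀ nn i, i ≤ nn + 1 → pp nn i = unif 0 s nn i := by
    intro nn i hi; simp only [hppdef]; rw [if_pos hi]
  have hppB : ∀ nn i, pp nn ((nn + 1) + i) = unif s t nn i := by
    intro nn i
    rcases Nat.eq_zero_or_pos i with rfl | hi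
    · simp only [hppdef]
      rw [if_pos (by omega), Nat.add_zero, unif_last, unif_zero]
    · simp only [hppdef]
      rw [if_neg (by omega)]
      congr 1
      omega
  have hstep : ∀ nn i, i < 2 * (nn + 1) → pp nn (i + 1) - pp nn i
      = (if i < nn + 1 then s / ((nn:ℝ) + 1) else (t - s) / ((nn:ℝ) + 1)) := by
    intro nn i hi
    by_cases hi1 : i + 1 ≤ nn + 1
    · rw [if_pos (by omega), hppA nn (i + 1) hi1, hppA nn i (by omega)]
      have := unif_step 0 s nn i
      rw [this]
      ring
    · by_cases hi2 : i ≤ nn + 1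
      · have hieq : i = nn + 1 := by omega
        subst hieq
        rw [if_neg (by omega)]
        have e1 : pp nn (nn + 1 + 1) = unif s t nn 1 := hppB nn 1
        have e0 : pp nn (nn + 1) = unif s t nn 0 := by
          have := hppB nn 0; rwa [Nat.add_zero] at this
        rw [e1, e0, show (1 : ℕ) = 0 + 1 from rfl, unif_step]
      · rw [if_neg (by omega)]
        have e1 : pp nn (i + 1) = unif s t nn (i + 1 - (nn + 1)) := by
          simp only [hppdef]; rw [if_neg (by omega)]
        have e0 : pp nn i = unif s t nn (i - (nn + 1)) := by
          simp only [hppdef]; rw [if_neg (by omega)]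
        rw [e1, e0, (by omega : i + 1 - (nn + 1) = (i - (nn + 1)) + 1), unif_step]
  have hstep_nonneg : ∀ nn i, i < 2 * (nn + 1) → pp nn i ≤ pp nn (i + 1) := by
    intro nn i hi
    have := hstep nn i hi
    have hden : (0:ℝ) < (nn:ℝ) + 1 := by positivity
    by_cases hc : i < nn + 1
    · rw [if_pos hc] at this
      have h2 : (0:ℝ) ≤ s / ((nn:ℝ) + 1) := div_nonneg hs (by positivity)
      linarith
    · rw [if_neg hc] at this
      have h2 : (0:ℝ) ≤ (t - s) / ((nn:ℝ) + 1) := div_nonneg (by linarith) (by positivity)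
      linarith
  have hstep_mesh : ∀ nn i, i < 2 * (nn + 1) → pp nn (i + 1) - pp nn i ≤ T / ((nn:ℝ) + 1) := by
    intro nn i hi
    have hh := hstep nn i hi
    have hden : (0:ℝ) < (nn:ℝ) + 1 := by positivity
    by_cases hc : i < nn + 1
    · rw [if_pos hc] at hh
      rw [hh]
      gcongr
    · rw [if_neg hc] at hh
      rw [hh]
      have hts : t - s ≤ T := by linarith
      gcongr
  have htot : Tendsto (fun nn => ∑ i ∈ Finset.range (2 * (nn + 1)),
      Ξ (pp nn i) (pp nn (i + 1))) atTop (nhds (I t)) := by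
    refine hI t ⟨h0t, htT⟩ pp (fun nn => 2 * (nn + 1)) (fun nn => T / ((nn:ℝ) + 1))
      (fun nn => ?_) (fun nn => ?_) hstep_nonneg hstep_mesh (tendsto_div_succ T)
    · show pp nn 0 = 0
      rw [hppA nn 0 (by omega), unif_zero]
    · show pp nn (2 * (nn + 1)) = t
      rw [(by ring : 2 * (nn + 1) = (nn + 1) + (nn + 1)), hppB, unif_last]
  have hfirst : Tendsto (fun nn => ∑ i ∈ Finset.range (nn + 1),
      Ξ (unif 0 s nn i) (unif 0 s nn (i + 1))) atTop (nhds (I s)) := by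
    refine hI s ⟨hs, hsT⟩ (fun nn i => unif 0 s nn i) (fun nn => nn + 1)
      (fun nn => T / ((nn:ℝ) + 1)) (fun nn => unif_zero 0 s nn) (fun nn => unif_last 0 s nn)
      (fun nn i _ => unif_mono 0 s hs nn i) (fun nn i _ => ?_) (tendsto_div_succ T)
    show unif 0 s nn (i + 1) - unif 0 s nn i ≤ T / ((nn:ℝ) + 1)
    rw [unif_step, sub_zero]
    gcongr
  have hsplitsum : ∀ nn, (∑ i ∈ Finset.range (2 * (nn + 1)), Ξ (pp nn i) (pp nn (i + 1)))
      = (∑ i ∈ Finset.range (nn + 1), Ξ (unif 0 s nn i) (unif 0 s nn (i + 1))) + S2 nn := by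
    intro nn
    rw [(by ring : 2 * (nn + 1) = (nn + 1) + (nn + 1)), Finset.sum_range_add]
    congr 1
    · apply Finset.sum_congr rfl
      intro i hi
      rw [Finset.mem_range] at hi
      rw [hppA nn i (by omega), hppA nn (i + 1) (by omega)]
    · apply Finset.sum_congr rfl
      intro i _
      rw [show (nn + 1) + i + 1 = (nn + 1) + (i + 1) from rfl, hppB, hppB]
  have htend : Tendsto S2 atTop (nhds (I t - I s)) := by
    refine Tendsto.congr (fun nn => ?_) (htot.sub hfirst)
    rw [hsplitsum nn]
    abel
  have hlim : Tendsto (fun nn => S2 nn - Ξ s t) atTop (nhds (I t - I s - Ξ s t)) :=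
    htend.sub tendsto_const_nhds
  exact le_of_tendsto hlim.norm (Filter.Eventually.of_forall hbound)

end SubstAux


set_option maxHeartbeats 2000000 in
/-- substitution rule: Let `(X, 𝕏)` be an α-Hölder rough path on
`ℝⁿ` and `Z_t = Z_0 + ∫_0^t a dX + ∫_0^t b d[X]` with `(a, a')` controlled and
`b` α-Hölder. Then `Z' = a` (i.e. `a` is a Gubinelli derivative of `Z`), and
for any controlled path `(c, c')` with values in `L(U, W)`:
`∫_0^t c d_X Z = ∫_0^t c a dX + ∫_0^t c b d[X]`. Tensor products of
`V = ℝⁿ` are modelled by `VV` with bilinear `tensor` and transpose `τ`;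
Gubinelli derivatives in `L(V, L(·,·))` are realised on `VV` through the
canonical identification. -/
theorem substitution_rule {n : ℕ} {U W VV : Type*}
    [NormedAddCommGroup U] [NormedSpace ℝ U]
    [NormedAddCommGroup W] [NormedSpace ℝ W]
    [NormedAddCommGroup VV] [NormedSpace ℝ VV]
    (tensor : EuclideanSpace ℝ (Fin n) →L[ℝ] EuclideanSpace ℝ (Fin n) →L[ℝ] VV)
    (τ : VV →L[ℝ] VV)
    (htensor_norm : ∀ x y, ‖tensor x y‖ ≤ ‖x‖ * ‖y‖)
    (hτ : ∀ x y, τ (tensor x y) = tensor y x)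
    (α T : ℝ) (hα1 : 1/3 < α) (hα2 : α ≤ 1/2) (hT : 0 < T)
    (X : ℝ → EuclideanSpace ℝ (Fin n)) (XX : ℝ → ℝ → VV) (CX CXX : ℝ)
    (hX : ∀ s t : ℝ, 0 ≤ s → s ≤ t → t ≤ T →
      ‖X t - X s‖ ≤ CX * |t - s| ^ α)
    (hXX : ∀ s t : ℝ, 0 ≤ s → s ≤ t → t ≤ T →
      ‖XX s t‖ ≤ CXX * |t - s| ^ (2*α))
    (chen : ∀ s u t : ℝ, 0 ≤ s → s ≤ u → u ≤ t → t ≤ T →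
      XX s t = XX s u + XX u t + tensor (X u - X s) (X t - X u))
    -- the bracket
    (bkt : ℝ → ℝ → VV)
    (hbkt : ∀ s t : ℝ, bkt s t =
      tensor (X t - X s) (X t - X s) - (XX s t + τ (XX s t)))
    -- (a, a') controlled with values in L(ℝⁿ, U); a' realised on VV by A2
    (a : ℝ → EuclideanSpace ℝ (Fin n) →L[ℝ] U) (A2 : ℝ → VV →L[ℝ] U)
    (Ca CA2 CRa : ℝ)
    (ha : ∀ s t : ℝ, 0 ≤ s → s ≤ t → t ≤ T → ‖a t - a s‖ ≤ Ca * |t - s| ^ α)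
    (hA2 : ∀ s t : ℝ, 0 ≤ s → s ≤ t → t ≤ T →
      ‖A2 t - A2 s‖ ≤ CA2 * |t - s| ^ α)
    (hRa : ∀ s t : ℝ, 0 ≤ s → s ≤ t → t ≤ T → ∀ v,
      ‖a t v - a s v - A2 s (tensor (X t - X s) v)‖
        ≤ CRa * |t - s| ^ (2*α) * ‖v‖)
    -- b α-Hölder with values in L(ℝⁿ⊗ℝⁿ, U)
    (b : ℝ → VV →L[ℝ] U) (Cb : ℝ)
    (hb : ∀ s t : ℝ, 0 ≤ s → s ≤ t → t ≤ T → ‖b t - b s‖ ≤ Cb * |t - s| ^ α)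
    -- the two integrals defining Z, and Z itself
    (IA IB : ℝ → U) (hIA0 : IA 0 = 0) (hIB0 : IB 0 = 0)
    (hIA : ∀ t ∈ Icc (0:ℝ) T, IsPartitionLimit 0 t
      (fun u v => a u (X v - X u) + A2 u (XX u v)) (IA t))
    (hIB : ∀ t ∈ Icc (0:ℝ) T, IsPartitionLimit 0 t
      (fun u v => b u (bkt u v)) (IB t))
    (Z : ℝ → U)
    (hZ : ∀ t ∈ Icc (0:ℝ) T, Z t = Z 0 + IA t + IB t)
    -- the controlled path (c, c') with values in L(U, W)
    (c : ℝ → U →L[ℝ] W) (c' : ℝ → EuclideanSpace ℝ (Fin n) →L[ℝ] U →L[ℝ] W)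
    (Cc Cc' CRc : ℝ)
    (hc : ∀ s t : ℝ, 0 ≤ s → s ≤ t → t ≤ T → ‖c t - c s‖ ≤ Cc * |t - s| ^ α)
    (hc' : ∀ s t : ℝ, 0 ≤ s → s ≤ t → t ≤ T →
      ‖c' t - c' s‖ ≤ Cc' * |t - s| ^ α)
    (hRc : ∀ s t : ℝ, 0 ≤ s → s ≤ t → t ≤ T →
      ‖c t - c s - c' s (X t - X s)‖ ≤ CRc * |t - s| ^ (2*α))
    -- the product `c'·a` realised on VV
    (CM : ℝ → VV →L[ℝ] W) (CCM : ℝ)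
    (hCM : ∀ u : ℝ, ∀ x y, CM u (tensor x y) = c' u x (a u y))
    (hCMholder : ∀ s t : ℝ, 0 ≤ s → s ≤ t → t ≤ T →
      ‖CM t - CM s‖ ≤ CCM * |t - s| ^ α) :
    -- (1) a is a Gubinelli derivative of Z, i.e. Z' = a
    (∃ CR : ℝ, ∀ s t : ℝ, 0 ≤ s → s ≤ t → t ≤ T →
      ‖Z t - Z s - a s (X t - X s)‖ ≤ CR * |t - s| ^ (2*α)) ∧
    -- (2) the substitution rule ∫ c d_X Z = ∫ c a dX + ∫ c b d[X]
    (∀ t ∈ Icc (0:ℝ) T, ∀ J1 J2 J3 : W,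
      IsPartitionLimit 0 t
        (fun u v => c u (Z v - Z u) + CM u (XX u v)) J1 →
      IsPartitionLimit 0 t
        (fun u v => c u (a u (X v - X u)) +
          (CM u + (c u).comp (A2 u)) (XX u v)) J2 →
      IsPartitionLimit 0 t (fun u v => c u (b u (bkt u v))) J3 →
      J1 = J2 + J3) := by
  have hα0 : (0:ℝ) < α := by linarith
  have hαnn : (0:ℝ) ≤ α := le_of_lt hα0
  have h2αnn : (0:ℝ) ≤ 2 * α := by linarith
  have h3α1 : (1:ℝ) < 3 * α := by linarith
  have hTnn : (0:ℝ) ≤ T := le_of_lt hT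
  obtain ⟨K, hK0, hK⟩ := SubstAux.partial_sum_bound (3 * α) h3α1
  -- absified Hölder bounds
  have hXr : ∀ s t : ℝ, 0 ≤ s → s ≤ t → t ≤ T → ‖X t - X s‖ ≤ |CX| * (t - s) ^ α := by
    intro s t h1 h2 h3
    have h := hX s t h1 h2 h3
    rw [abs_of_nonneg (by linarith : (0:ℝ) ≤ t - s)] at h
    exact h.trans (mul_le_mul_of_nonneg_right (le_abs_self _)
      (Real.rpow_nonneg (by linarith) _))
  have hXXr : ∀ s t : ℝ, 0 ≤ s → s ≤ t → t ≤ T → ‖XX s t‖ ≤ |CXX| * (t - s) ^ (2*α) := by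
    intro s t h1 h2 h3
    have h := hXX s t h1 h2 h3
    rw [abs_of_nonneg (by linarith : (0:ℝ) ≤ t - s)] at h
    exact h.trans (mul_le_mul_of_nonneg_right (le_abs_self _)
      (Real.rpow_nonneg (by linarith) _))
  have hA2r : ∀ s t : ℝ, 0 ≤ s → s ≤ t → t ≤ T → ‖A2 t - A2 s‖ ≤ |CA2| * (t - s) ^ α := by
    intro s t h1 h2 h3
    have h := hA2 s t h1 h2 h3
    rw [abs_of_nonneg (by linarith : (0:ℝ) ≤ t - s)] at h
    exact h.trans (mul_le_mul_of_nonneg_right (le_abs_self _)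
      (Real.rpow_nonneg (by linarith) _))
  have hbr : ∀ s t : ℝ, 0 ≤ s → s ≤ t → t ≤ T → ‖b t - b s‖ ≤ |Cb| * (t - s) ^ α := by
    intro s t h1 h2 h3
    have h := hb s t h1 h2 h3
    rw [abs_of_nonneg (by linarith : (0:ℝ) ≤ t - s)] at h
    exact h.trans (mul_le_mul_of_nonneg_right (le_abs_self _)
      (Real.rpow_nonneg (by linarith) _))
  -- uniform bounds
  have hbB := SubstAux.holder_bound T α hTnn hαnn b Cb hb
  have hA2B := SubstAux.holder_bound T α hTnn hαnn A2 CA2 hA2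
  have hcB := SubstAux.holder_bound T α hTnn hαnn c Cc hc
  set Bb := ‖b 0‖ + |Cb| * T ^ α with hBbdef
  set BA2 := ‖A2 0‖ + |CA2| * T ^ α with hBA2def
  set Bc := ‖c 0‖ + |Cc| * T ^ α with hBcdef
  have hBc0 : 0 ≤ Bc := by
    have := Real.rpow_nonneg hTnn α
    rw [hBcdef]; positivity
  have hBb0 : 0 ≤ Bb := by
    have := Real.rpow_nonneg hTnn α
    rw [hBbdef]; positivity
  have hBA20 : 0 ≤ BA2 := by
    have := Real.rpow_nonneg hTnn α
    rw [hBA2def]; positivity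
  -- bracket additivity and norm
  have hbkt_add : ∀ u v w : ℝ, 0 ≤ u → u ≤ v → v ≤ w → w ≤ T →
      bkt u w = bkt u v + bkt v w := by
    intro u v w h1 h2 h3 h4
    rw [hbkt, hbkt, hbkt, chen u v w h1 h2 h3 h4]
    have e : X w - X u = (X v - X u) + (X w - X v) := by abel
    rw [e]
    simp only [map_add, ContinuousLinearMap.add_apply, hτ]
    abel
  set Cbkt := |CX|^2 + (1 + ‖τ‖) * |CXX| with hCbktdef
  have hCbkt0 : 0 ≤ Cbkt := by rw [hCbktdef]; positivity
  have hbkt_norm : ∀ u v : ℝ, 0 ≤ u → u ≤ v → v ≤ T →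
      ‖bkt u v‖ ≤ Cbkt * (v - u) ^ (2*α) := by
    intro u v h1 h2 h3
    have hvu : (0:ℝ) ≤ v - u := by linarith
    rw [hbkt]
    have hx := hXr u v h1 h2 h3
    have hxx := hXXr u v h1 h2 h3
    have h4 : ‖tensor (X v - X u) (X v - X u)‖ ≤ (|CX| * (v-u)^α) * (|CX| * (v-u)^α) :=
      (htensor_norm _ _).trans (mul_le_mul hx hx (norm_nonneg _) (by positivity))
    have h5 : ‖τ (XX u v)‖ ≤ ‖τ‖ * (|CXX| * (v-u)^(2*α)) :=
      (τ.le_opNorm _).trans (mul_le_mul_of_nonneg_left hxx (norm_nonneg _))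
    have h6 : (v-u)^α * (v-u)^α = (v-u)^(2*α) := by
      rw [← Real.rpow_add' hvu (by positivity : α + α ≠ 0)]
      congr 1; ring
    calc ‖tensor (X v - X u) (X v - X u) - (XX u v + τ (XX u v))‖
        ≤ ‖tensor (X v - X u) (X v - X u)‖ + ‖XX u v + τ (XX u v)‖ := norm_sub_le _ _
      _ ≤ ‖tensor (X v - X u) (X v - X u)‖ + (‖XX u v‖ + ‖τ (XX u v)‖) := by
          exact add_le_add le_rfl (norm_add_le _ _)
      _ ≤ (|CX| * (v-u)^α) * (|CX| * (v-u)^α)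
            + (|CXX| * (v-u)^(2*α) + ‖τ‖ * (|CXX| * (v-u)^(2*α))) :=
          add_le_add h4 (add_le_add hxx h5)
      _ = (|CX|^2 + (1 + ‖τ‖) * |CXX|) * (v-u)^(2*α) := by rw [← h6]; ring
  -- coherence for Ξa
  set Cδa := |CRa| * |CX| + |CA2| * |CXX| with hCδadef
  have hCδa0 : 0 ≤ Cδa := by rw [hCδadef]; positivity
  have hcoha : ∀ u v w : ℝ, 0 ≤ u → u ≤ v → v ≤ w → w ≤ T →
      ‖(a u (X w - X u) + A2 u (XX u w)) - (a u (X v - X u) + A2 u (XX u v))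
        - (a v (X w - X v) + A2 v (XX v w))‖ ≤ Cδa * (w - u) ^ (3*α) := by
    intro u v w h1 h2 h3 h4
    have hvT : v ≤ T := h3.trans h4
    have hwu : (0:ℝ) ≤ w - u := by linarith
    have e : (a u (X w - X u) + A2 u (XX u w)) - (a u (X v - X u) + A2 u (XX u v))
        - (a v (X w - X v) + A2 v (XX v w))
        = -(a v (X w - X v) - a u (X w - X v) - A2 u (tensor (X v - X u) (X w - X v)))
          - (A2 v (XX v w) - A2 u (XX v w)) := by
      rw [chen u v w h1 h2 h3 h4]
      have e2 : X w - X u = (X v - X u) + (X w - X v) := by abel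
      rw [e2]
      simp only [map_add]
      abel
    rw [e]
    have hb1 : ‖a v (X w - X v) - a u (X w - X v) - A2 u (tensor (X v - X u) (X w - X v))‖
        ≤ |CRa| * (w - u) ^ (2*α) * (|CX| * (w - u) ^ α) := by
      have h := hRa u v h1 h2 hvT (X w - X v)
      rw [abs_of_nonneg (by linarith : (0:ℝ) ≤ v - u)] at h
      refine h.trans ?_
      have hX2 : ‖X w - X v‖ ≤ |CX| * (w - u) ^ α :=
        (hXr v w (h1.trans h2) h3 h4).trans (mul_le_mul_of_nonneg_left
          (Real.rpow_le_rpow (by linarith) (by linarith) hαnn) (abs_nonneg _))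
      have hp : (v - u) ^ (2*α) ≤ (w - u) ^ (2*α) :=
        Real.rpow_le_rpow (by linarith) (by linarith) h2αnn
      exact mul_le_mul (mul_le_mul (le_abs_self _) hp
        (Real.rpow_nonneg (by linarith) _) (abs_nonneg _)) hX2 (norm_nonneg _) (by positivity)
    have hb2 : ‖A2 v (XX v w) - A2 u (XX v w)‖
        ≤ (|CA2| * (w - u) ^ α) * (|CXX| * (w - u) ^ (2*α)) := by
      have e3 : A2 v (XX v w) - A2 u (XX v w) = (A2 v - A2 u) (XX v w) := by
        simp [ContinuousLinearMap.sub_apply]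
      rw [e3]
      refine ((A2 v - A2 u).le_opNorm (XX v w)).trans ?_
      have hA' : ‖A2 v - A2 u‖ ≤ |CA2| * (w - u) ^ α :=
        (hA2r u v h1 h2 hvT).trans (mul_le_mul_of_nonneg_left
          (Real.rpow_le_rpow (by linarith) (by linarith) hαnn) (abs_nonneg _))
      have hXX' : ‖XX v w‖ ≤ |CXX| * (w - u) ^ (2*α) :=
        (hXXr v w (h1.trans h2) h3 h4).trans (mul_le_mul_of_nonneg_left
          (Real.rpow_le_rpow (by linarith) (by linarith) h2αnn) (abs_nonneg _))
      exact mul_le_mul hA' hXX' (norm_nonneg _) (by positivity)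
    have hmul : (w-u)^(2*α) * (w-u)^α = (w-u)^(3*α) := by
      rw [← Real.rpow_add' hwu (by positivity : 2*α + α ≠ 0)]
      congr 1; ring
    calc ‖-(a v (X w - X v) - a u (X w - X v) - A2 u (tensor (X v - X u) (X w - X v)))
          - (A2 v (XX v w) - A2 u (XX v w))‖
        ≤ ‖-(a v (X w - X v) - a u (X w - X v) - A2 u (tensor (X v - X u) (X w - X v)))‖
            + ‖A2 v (XX v w) - A2 u (XX v w)‖ := norm_sub_le _ _
      _ = ‖a v (X w - X v) - a u (X w - X v) - A2 u (tensor (X v - X u) (X w - X v))‖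
            + ‖A2 v (XX v w) - A2 u (XX v w)‖ := by rw [norm_neg]
      _ ≤ |CRa| * (w - u) ^ (2*α) * (|CX| * (w - u) ^ α)
            + (|CA2| * (w - u) ^ α) * (|CXX| * (w - u) ^ (2*α)) := add_le_add hb1 hb2
      _ = Cδa * ((w-u)^(2*α) * (w-u)^α) := by rw [hCδadef]; ring
      _ = Cδa * (w-u)^(3*α) := by rw [hmul]
  -- coherence for Ξb
  set Cδb := |Cb| * Cbkt with hCδbdef
  have hCδb0 : 0 ≤ Cδb := mul_nonneg (abs_nonneg _) hCbkt0
  have hcohb : ∀ u v w : ℝ, 0 ≤ u → u ≤ v → v ≤ w → w ≤ T →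
      ‖(b u (bkt u w)) - (b u (bkt u v)) - (b v (bkt v w))‖ ≤ Cδb * (w - u) ^ (3*α) := by
    intro u v w h1 h2 h3 h4
    have hwu : (0:ℝ) ≤ w - u := by linarith
    have e : (b u (bkt u w)) - (b u (bkt u v)) - (b v (bkt v w))
        = (b u - b v) (bkt v w) := by
      rw [hbkt_add u v w h1 h2 h3 h4, map_add]
      simp [ContinuousLinearMap.sub_apply]
    rw [e]
    refine ((b u - b v).le_opNorm (bkt v w)).trans ?_
    have h5 : ‖b u - b v‖ ≤ |Cb| * (w - u) ^ α := by
      rw [norm_sub_rev]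
      exact (hbr u v h1 h2 (h3.trans h4)).trans (mul_le_mul_of_nonneg_left
        (Real.rpow_le_rpow (by linarith) (by linarith) hαnn) (abs_nonneg _))
    have h6 : ‖bkt v w‖ ≤ Cbkt * (w - u) ^ (2*α) :=
      (hbkt_norm v w (h1.trans h2) h3 h4).trans (mul_le_mul_of_nonneg_left
        (Real.rpow_le_rpow (by linarith) (by linarith) h2αnn) hCbkt0)
    have hmul : (w-u)^α * (w-u)^(2*α) = (w-u)^(3*α) := by
      rw [← Real.rpow_add' hwu (by positivity : α + 2*α ≠ 0)]
      congr 1; ring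
    calc ‖b u - b v‖ * ‖bkt v w‖ ≤ (|Cb| * (w - u) ^ α) * (Cbkt * (w - u) ^ (2*α)) :=
          mul_le_mul h5 h6 (norm_nonneg _) (by positivity)
      _ = Cδb * ((w-u)^α * (w-u)^(2*α)) := by rw [hCδbdef]; ring
      _ = Cδb * (w-u)^(3*α) := by rw [hmul]
  -- increment estimates
  set Ka := Cδa * 2 ^ (3*α) * K with hKadef
  set Kb := Cδb * 2 ^ (3*α) * K with hKbdef
  have hKa0 : 0 ≤ Ka := by
    rw [hKadef]
    have : (0:ℝ) ≤ (2:ℝ) ^ (3*α) := Real.rpow_nonneg (by norm_num) _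
    positivity
  have hKb0 : 0 ≤ Kb := by
    rw [hKbdef]
    have : (0:ℝ) ≤ (2:ℝ) ^ (3*α) := Real.rpow_nonneg (by norm_num) _
    positivity
  have hIAest : ∀ s t : ℝ, 0 ≤ s → s ≤ t → t ≤ T →
      ‖IA t - IA s - (a s (X t - X s) + A2 s (XX s t))‖ ≤ Ka * (t - s) ^ (3*α) := by
    intro s t h1 h2 h3
    exact SubstAux.increment_est T (3*α) Cδa K
      (fun u v => a u (X v - X u) + A2 u (XX u v)) IA h3α1 hCδa0 hK hIA hcoha s t h1 h2 h3
  have hIBest : ∀ s t : ℝ, 0 ≤ s → s ≤ t → t ≤ T →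
      ‖IB t - IB s - b s (bkt s t)‖ ≤ Kb * (t - s) ^ (3*α) := by
    intro s t h1 h2 h3
    exact SubstAux.increment_est T (3*α) Cδb K
      (fun u v => b u (bkt u v)) IB h3α1 hCδb0 hK hIB hcohb s t h1 h2 h3
  -- exponent reduction
  have h3to2 : ∀ s t : ℝ, 0 ≤ s → s ≤ t → t ≤ T →
      (t - s) ^ (3*α) ≤ (t - s) ^ (2*α) * T ^ α := by
    intro s t h1 h2 h3
    have hts : (0:ℝ) ≤ t - s := by linarith
    have e : (t - s) ^ (3*α) = (t - s) ^ (2*α) * (t - s) ^ α := by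
      rw [← Real.rpow_add' hts (by positivity : 2*α + α ≠ 0)]
      congr 1; ring
    rw [e]
    exact mul_le_mul_of_nonneg_left (Real.rpow_le_rpow hts (by linarith) hαnn)
      (Real.rpow_nonneg hts _)
  constructor
  · -- Part (1)
    refine ⟨Ka * T^α + Kb * T^α + BA2 * |CXX| + Bb * Cbkt, ?_⟩
    intro s t h1 h2 h3
    have h0t : 0 ≤ t := h1.trans h2
    have hsT : s ≤ T := h2.trans h3
    have hZs := hZ s ⟨h1, hsT⟩
    have hZt := hZ t ⟨h0t, h3⟩
    rw [abs_of_nonneg (by linarith : (0:ℝ) ≤ t - s)]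
    have hA := hIAest s t h1 h2 h3
    have hB := hIBest s t h1 h2 h3
    have hxxb : ‖A2 s (XX s t)‖ ≤ BA2 * (|CXX| * (t - s)^(2*α)) :=
      ((A2 s).le_opNorm _).trans (mul_le_mul (hA2B s h1 hsT) (hXXr s t h1 h2 h3)
        (norm_nonneg _) hBA20)
    have hbb : ‖b s (bkt s t)‖ ≤ Bb * (Cbkt * (t - s)^(2*α)) :=
      ((b s).le_opNorm _).trans (mul_le_mul (hbB s h1 hsT) (hbkt_norm s t h1 h2 h3)
        (norm_nonneg _) hBb0)
    have hdecomp : Z t - Z s - a s (X t - X s)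
        = ((IA t - IA s - (a s (X t - X s) + A2 s (XX s t)))
            + (IB t - IB s - b s (bkt s t)))
          + (A2 s (XX s t) + b s (bkt s t)) := by
      rw [hZt, hZs]; abel
    rw [hdecomp]
    have hred := h3to2 s t h1 h2 h3
    have b1 : ‖IA t - IA s - (a s (X t - X s) + A2 s (XX s t))‖
        ≤ (Ka * T^α) * (t - s)^(2*α) := by
      refine hA.trans ?_
      calc Ka * (t - s)^(3*α) ≤ Ka * ((t - s)^(2*α) * T^α) :=
            mul_le_mul_of_nonneg_left hred hKa0
        _ = (Ka * T^α) * (t - s)^(2*α) := by ring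
    have b2 : ‖IB t - IB s - b s (bkt s t)‖ ≤ (Kb * T^α) * (t - s)^(2*α) := by
      refine hB.trans ?_
      calc Kb * (t - s)^(3*α) ≤ Kb * ((t - s)^(2*α) * T^α) :=
            mul_le_mul_of_nonneg_left hred hKb0
        _ = (Kb * T^α) * (t - s)^(2*α) := by ring
    have b3 : ‖A2 s (XX s t)‖ ≤ (BA2 * |CXX|) * (t - s)^(2*α) := by
      refine hxxb.trans ?_; apply le_of_eq; ring
    have b4 : ‖b s (bkt s t)‖ ≤ (Bb * Cbkt) * (t - s)^(2*α) := by
      refine hbb.trans ?_; apply le_of_eq; ring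
    have goal_eq : (Ka * T^α + Kb * T^α + BA2 * |CXX| + Bb * Cbkt) * (t - s)^(2*α)
        = (Ka * T^α) * (t - s)^(2*α) + (Kb * T^α) * (t - s)^(2*α)
          + (BA2 * |CXX|) * (t - s)^(2*α) + (Bb * Cbkt) * (t - s)^(2*α) := by ring
    rw [goal_eq]
    calc ‖((IA t - IA s - (a s (X t - X s) + A2 s (XX s t)))
            + (IB t - IB s - b s (bkt s t)))
          + (A2 s (XX s t) + b s (bkt s t))‖
        ≤ ‖(IA t - IA s - (a s (X t - X s) + A2 s (XX s t)))
            + (IB t - IB s - b s (bkt s t))‖ + ‖A2 s (XX s t) + b s (bkt s t)‖ :=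
          norm_add_le _ _
      _ ≤ (‖IA t - IA s - (a s (X t - X s) + A2 s (XX s t))‖
            + ‖IB t - IB s - b s (bkt s t)‖)
          + (‖A2 s (XX s t)‖ + ‖b s (bkt s t)‖) :=
          add_le_add (norm_add_le _ _) (norm_add_le _ _)
      _ ≤ _ := by linarith
  · -- Part (2)
    intro t ht J1 J2 J3 hJ1 hJ2 hJ3
    obtain ⟨h0t, htT⟩ := ht
    -- local error bound
    set Cfin := Bc * (Ka + Kb) with hCfindef
    have hCfin0 : 0 ≤ Cfin := by rw [hCfindef]; positivity
    have hterm : ∀ u v : ℝ, 0 ≤ u → u ≤ v → v ≤ t →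
        ‖(c u (Z v - Z u) + CM u (XX u v))
          - ((c u (a u (X v - X u)) + (CM u + (c u).comp (A2 u)) (XX u v))
              + c u (b u (bkt u v)))‖
        ≤ Cfin * (v - u)^(3*α) := by
      intro u v h1 h2 h3
      have h3T : v ≤ T := h3.trans htT
      have hZu := hZ u ⟨h1, h2.trans h3T⟩
      have hZv := hZ v ⟨h1.trans h2, h3T⟩
      have e : (c u (Z v - Z u) + CM u (XX u v))
          - ((c u (a u (X v - X u)) + (CM u + (c u).comp (A2 u)) (XX u v))
              + c u (b u (bkt u v)))
          = c u ((IA v - IA u - (a u (X v - X u) + A2 u (XX u v)))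
              + (IB v - IB u - b u (bkt u v))) := by
        rw [hZv, hZu]
        simp only [ContinuousLinearMap.add_apply, ContinuousLinearMap.coe_comp',
          Function.comp_apply, map_add, map_sub]
        abel
      rw [e]
      refine ((c u).le_opNorm _).trans ?_
      have hnb : ‖(IA v - IA u - (a u (X v - X u) + A2 u (XX u v)))
          + (IB v - IB u - b u (bkt u v))‖
          ≤ Ka * (v - u)^(3*α) + Kb * (v - u)^(3*α) :=
        (norm_add_le _ _).trans (add_le_add (hIAest u v h1 h2 h3T) (hIBest u v h1 h2 h3T))
      calc ‖c u‖ * ‖(IA v - IA u - (a u (X v - X u) + A2 u (XX u v)))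
            + (IB v - IB u - b u (bkt u v))‖
          ≤ Bc * (Ka * (v - u)^(3*α) + Kb * (v - u)^(3*α)) := by
            apply mul_le_mul (hcB u h1 (h2.trans h3T)) hnb (norm_nonneg _) hBc0
        _ = Cfin * (v - u)^(3*α) := by rw [hCfindef]; ring
    -- uniform partitions of [0, t]
    have hP0 : ∀ nn : ℕ, SubstAux.unif 0 t nn 0 = 0 := fun nn => SubstAux.unif_zero 0 t nn
    have hPl : ∀ nn : ℕ, SubstAux.unif 0 t nn (nn + 1) = t := fun nn => SubstAux.unif_last 0 t nn
    have hPm : ∀ nn i, i < nn + 1 → SubstAux.unif 0 t nn i ≤ SubstAux.unif 0 t nn (i + 1) :=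
      fun nn i _ => SubstAux.unif_mono 0 t h0t nn i
    have hPstep : ∀ nn i, SubstAux.unif 0 t nn (i + 1) - SubstAux.unif 0 t nn i
        = t / ((nn:ℝ) + 1) := by
      intro nn i
      rw [SubstAux.unif_step, sub_zero]
    have hPmesh : ∀ nn i, i < nn + 1 →
        SubstAux.unif 0 t nn (i + 1) - SubstAux.unif 0 t nn i ≤ t / ((nn:ℝ) + 1) :=
      fun nn i _ => le_of_eq (hPstep nn i)
    have hT1 := hJ1 (fun nn i => SubstAux.unif 0 t nn i) (fun nn => nn + 1)
      (fun nn => t / ((nn:ℝ) + 1)) hP0 hPl hPm hPmesh (SubstAux.tendsto_div_succ t)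
    have hT2 := hJ2 (fun nn i => SubstAux.unif 0 t nn i) (fun nn => nn + 1)
      (fun nn => t / ((nn:ℝ) + 1)) hP0 hPl hPm hPmesh (SubstAux.tendsto_div_succ t)
    have hT3 := hJ3 (fun nn i => SubstAux.unif 0 t nn i) (fun nn => nn + 1)
      (fun nn => t / ((nn:ℝ) + 1)) hP0 hPl hPm hPmesh (SubstAux.tendsto_div_succ t)
    have hAtend := hT1.sub (hT2.add hT3)
    -- squeeze
    have hbound : ∀ nn : ℕ,
        ‖(∑ i ∈ Finset.range (nn + 1),
            (c (SubstAux.unif 0 t nn i) (Z (SubstAux.unif 0 t nn (i+1)) - Z (SubstAux.unif 0 t nn i))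
              + CM (SubstAux.unif 0 t nn i) (XX (SubstAux.unif 0 t nn i) (SubstAux.unif 0 t nn (i+1)))))
          - ((∑ i ∈ Finset.range (nn + 1),
              (c (SubstAux.unif 0 t nn i) (a (SubstAux.unif 0 t nn i)
                  (X (SubstAux.unif 0 t nn (i+1)) - X (SubstAux.unif 0 t nn i)))
                + (CM (SubstAux.unif 0 t nn i)
                    + (c (SubstAux.unif 0 t nn i)).comp (A2 (SubstAux.unif 0 t nn i)))
                  (XX (SubstAux.unif 0 t nn i) (SubstAux.unif 0 t nn (i+1)))))
            + (∑ i ∈ Finset.range (nn + 1),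
              c (SubstAux.unif 0 t nn i) (b (SubstAux.unif 0 t nn i)
                (bkt (SubstAux.unif 0 t nn i) (SubstAux.unif 0 t nn (i+1))))))‖
        ≤ Cfin * (t * (t / ((nn:ℝ) + 1)) ^ (3*α - 1)) := by
      intro nn
      rw [← Finset.sum_add_distrib, ← Finset.sum_sub_distrib]
      have hden : (0:ℝ) < (nn:ℝ) + 1 := by positivity
      have htq : (0:ℝ) ≤ t / ((nn:ℝ) + 1) := div_nonneg h0t (by positivity)
      have hper : ∀ i ∈ Finset.range (nn + 1),
          ‖(c (SubstAux.unif 0 t nn i) (Z (SubstAux.unif 0 t nn (i+1)) - Z (SubstAux.unif 0 t nn i))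
              + CM (SubstAux.unif 0 t nn i) (XX (SubstAux.unif 0 t nn i) (SubstAux.unif 0 t nn (i+1))))
            - ((c (SubstAux.unif 0 t nn i) (a (SubstAux.unif 0 t nn i)
                  (X (SubstAux.unif 0 t nn (i+1)) - X (SubstAux.unif 0 t nn i)))
                + (CM (SubstAux.unif 0 t nn i)
                    + (c (SubstAux.unif 0 t nn i)).comp (A2 (SubstAux.unif 0 t nn i)))
                  (XX (SubstAux.unif 0 t nn i) (SubstAux.unif 0 t nn (i+1))))
              + c (SubstAux.unif 0 t nn i) (b (SubstAux.unif 0 t nn i)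
                (bkt (SubstAux.unif 0 t nn i) (SubstAux.unif 0 t nn (i+1)))))‖
          ≤ Cfin * (t / ((nn:ℝ) + 1)) ^ (3*α) := by
        intro i hi
        rw [Finset.mem_range] at hi
        have hm1 := SubstAux.unif_mem 0 t h0t nn i (by omega)
        have hm2 := SubstAux.unif_mem 0 t h0t nn (i+1) (by omega)
        have := hterm (SubstAux.unif 0 t nn i) (SubstAux.unif 0 t nn (i+1))
          hm1.1 (hPm nn i hi) hm2.2
        rwa [hPstep nn i] at this
      calc ‖∑ i ∈ Finset.range (nn + 1), _‖ ≤ _ := norm_sum_le _ _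
        _ ≤ ∑ _i ∈ Finset.range (nn + 1), Cfin * (t / ((nn:ℝ) + 1)) ^ (3*α) :=
            Finset.sum_le_sum hper
        _ = ((nn:ℝ) + 1) * (Cfin * (t / ((nn:ℝ) + 1)) ^ (3*α)) := by
            rw [Finset.sum_const, Finset.card_range, nsmul_eq_mul]
            push_cast
            ring
        _ = Cfin * (t * (t / ((nn:ℝ) + 1)) ^ (3*α - 1)) := by
            have hq : (t / ((nn:ℝ) + 1)) ^ (3*α)
                = (t / ((nn:ℝ) + 1)) * (t / ((nn:ℝ) + 1)) ^ (3*α - 1) := by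
              calc (t / ((nn:ℝ) + 1)) ^ (3*α)
                  = (t / ((nn:ℝ) + 1)) ^ (1 + (3*α - 1)) := by congr 1; ring
                _ = (t / ((nn:ℝ) + 1)) ^ (1:ℝ) * (t / ((nn:ℝ) + 1)) ^ (3*α - 1) :=
                    Real.rpow_add' htq (by linarith)
                _ = (t / ((nn:ℝ) + 1)) * (t / ((nn:ℝ) + 1)) ^ (3*α - 1) := by
                    rw [Real.rpow_one]
            rw [hq]
            have hden' : ((nn:ℝ) + 1) ≠ 0 := by positivity
            field_simp
    have hbtend : Tendsto (fun nn : ℕ => Cfin * (t * (t / ((nn:ℝ) + 1)) ^ (3*α - 1)))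
        atTop (nhds 0) := by
      have h1 : Tendsto (fun nn : ℕ => t / ((nn:ℝ) + 1)) atTop (nhds 0) :=
        SubstAux.tendsto_div_succ t
      have h2 : Tendsto (fun nn : ℕ => (t / ((nn:ℝ) + 1)) ^ (3*α - 1)) atTop (nhds 0) := by
        have hc2 := (Real.continuousAt_rpow_const 0 (3*α - 1) (Or.inr (by linarith))).tendsto
        have h3 := hc2.comp h1
        simpa [Function.comp_def, Real.zero_rpow (show 3*α - 1 ≠ 0 from ne_of_gt (by linarith))]
          using h3
      have h4 := h2.const_mul t
      have h5 := (h2.const_mul t).const_mul Cfin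
      simpa using h5
    have hBtend : Tendsto _ atTop (nhds (0:W)) := squeeze_zero_norm hbound hbtend
    have := tendsto_nhds_unique hAtend hBtend
    exact sub_eq_zero.mp this
end
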